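/- arXiv:2101.01233 — 3 statements merged into one kernel-verified Lean document; each statement's English description precedes it below -/
import Mathlib

section
/- Let h : (0,1) → ℝ be non-increasing with ∫_0^1 h(t) dt = 0, and suppose that for every a ∈ (0,1), a·h(a) ≤ ∫_0^a h ≤ F(a) and (1−a)·h(a) ≥ ∫_a^1 h ≥ −F(a), where F(s) = Φ'(Φ^{-1}(s)) with Φ(x) = (4π)^{-1/2} ∫_{-∞}^x e^{-y²/4} dy. Then there is a universal constant C such that h(a) ≤ C(−log a)^{1/2} and h(1−a) ≥ −C(−log a)^{1/2} for all a ∈ (0, 1/4). -/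
set_option maxHeartbeats 2000000


open MeasureTheory

/-- If h is non-increasing on (0,1) with total integral 0 and satisfies
a·h(a) ≤ ∫_0^a h ≤ F(a) and −F(a) ≤ ∫_a^1 h ≤ (1−a)·h(a), where
F(s) = Φ'(Φ⁻¹(s)), then h(a) ≤ C√(−log a) and h(1−a) ≥ −C√(−log a)
for a ∈ (0,1/4) with a universal constant C. -/
theorem rearrangement_log_bound
    (Φ : ℝ → ℝ)
    (hΦ : ∀ x : ℝ, Φ x = (Real.sqrt (4 * Real.pi))⁻¹ * ∫ y in Set.Iic x, Real.exp (-y ^ 2 / 4))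
    (F : ℝ → ℝ) (hF : ∀ s : ℝ, F s = deriv Φ (Function.invFun Φ s)) :
    ∃ C : ℝ, 0 < C ∧ ∀ h : ℝ → ℝ, AntitoneOn h (Set.Ioo (0:ℝ) 1) →
      (∫ t in (0:ℝ)..1, h t) = 0 →
      (∀ a ∈ Set.Ioo (0:ℝ) 1,
        a * h a ≤ (∫ t in (0:ℝ)..a, h t) ∧ (∫ t in (0:ℝ)..a, h t) ≤ F a ∧
        -(F a) ≤ (∫ t in a..(1:ℝ), h t) ∧ (∫ t in a..(1:ℝ), h t) ≤ (1 - a) * h a) →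
      ∀ a ∈ Set.Ioo (0:ℝ) (1/4),
        h a ≤ C * Real.sqrt (-Real.log a) ∧ -(C * Real.sqrt (-Real.log a)) ≤ h (1 - a) := by
  have pi_pos := Real.pi_pos
  have sqrt4pi_pos : 0 < Real.sqrt (4 * Real.pi) := Real.sqrt_pos.2 (by positivity)
  set c : ℝ := (Real.sqrt (4 * Real.pi))⁻¹ with hcdef
  have hc_pos : 0 < c := inv_pos.2 sqrt4pi_pos
  have hc1 : c * Real.sqrt (4 * Real.pi) = 1 := inv_mul_cancel₀ (ne_of_gt sqrt4pi_pos)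
  have hgcont : Continuous fun y : ℝ => Real.exp (-y ^ 2 / 4) := by continuity
  have hint : Integrable (fun y : ℝ => Real.exp (-y ^ 2 / 4)) := by
    have h := integrable_exp_neg_mul_sq (show (0:ℝ) < 1/4 by norm_num)
    simpa only [show ∀ y : ℝ, -(1/4 : ℝ) * y ^ 2 = -y ^ 2 / 4 from fun y => by ring] using h
  have htotal : (∫ y : ℝ, Real.exp (-y ^ 2 / 4)) = Real.sqrt (4 * Real.pi) := by
    have h := integral_gaussian (1/4 : ℝ)
    rw [show Real.pi / (1/4 : ℝ) = 4 * Real.pi by ring] at h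
    rw [← h]
    exact integral_congr_ae (Filter.Eventually.of_forall fun y => by norm_num; ring_nf)
  have hint8 : Integrable (fun y : ℝ => Real.exp (-y ^ 2 / 8)) := by
    have h := integrable_exp_neg_mul_sq (show (0:ℝ) < 1/8 by norm_num)
    simpa only [show ∀ y : ℝ, -(1/8 : ℝ) * y ^ 2 = -y ^ 2 / 8 from fun y => by ring] using h
  have htotal8 : (∫ y : ℝ, Real.exp (-y ^ 2 / 8)) = Real.sqrt (8 * Real.pi) := by
    have h := integral_gaussian (1/8 : ℝ)
    rw [show Real.pi / (1/8 : ℝ) = 8 * Real.pi by ring] at h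
    rw [← h]
    exact integral_congr_ae (Filter.Eventually.of_forall fun y => by norm_num; ring_nf)
  -- derivative of Φ
  have hderiv : ∀ x : ℝ, HasDerivAt Φ (c * Real.exp (-x ^ 2 / 4)) x := by
    intro x
    have hΦeq : Φ = fun x => c * ((∫ y in Set.Iic (0:ℝ), Real.exp (-y ^ 2 / 4))
        + ∫ y in (0:ℝ)..x, Real.exp (-y ^ 2 / 4)) := by
      funext z
      rw [hΦ z]
      have h := intervalIntegral.integral_Iic_sub_Iic (a := (0:ℝ)) (b := z)
        hint.integrableOn hint.integrableOn
      rw [← h]; ring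
    rw [hΦeq]
    exact (((hgcont.integral_hasStrictDerivAt 0 x).hasDerivAt).const_add _).const_mul c
  have phi_cont : Continuous Φ :=
    continuous_iff_continuousAt.2 fun x => (hderiv x).continuousAt
  have phi_mono : StrictMono Φ :=
    strictMono_of_deriv_pos fun x => by
      rw [(hderiv x).deriv]; positivity
  have phi_pos : ∀ x : ℝ, 0 < Φ x := by
    intro x
    rw [hΦ]
    apply mul_pos hc_pos
    rw [setIntegral_pos_iff_support_of_nonneg_ae
      (Filter.Eventually.of_forall fun y => (Real.exp_pos _).le) hint.integrableOn]
    have hs : (Function.support fun y : ℝ => Real.exp (-y ^ 2 / 4)) = Set.univ := by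
      ext y; simp [Function.mem_support, Real.exp_ne_zero]
    rw [hs, Set.univ_inter, Real.volume_Iic]
    exact ENNReal.zero_lt_top
  -- symmetry
  have phi_symm : ∀ x : ℝ, Φ (-x) = 1 - Φ x := by
    intro x
    have h1 := integral_comp_neg_Iic (-x) (fun y => Real.exp (-y ^ 2 / 4))
    simp only [neg_neg, neg_sq] at h1
    have h2 := intervalIntegral.integral_Iic_add_Ioi (b := x)
      hint.integrableOn hint.integrableOn
    rw [htotal] at h2
    rw [hΦ (-x), hΦ x, h1, show (∫ y in Set.Ioi x, Real.exp (-y ^ 2 / 4))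
      = Real.sqrt (4 * Real.pi) - ∫ y in Set.Iic x, Real.exp (-y ^ 2 / 4) by linarith]
    rw [mul_sub, hcdef, inv_mul_cancel₀ (ne_of_gt sqrt4pi_pos)]
  -- upper bound by exp x, for x ≤ -4
  have phi_upper_exp : ∀ x : ℝ, x ≤ -4 → Φ x ≤ Real.exp x := by
    intro x hx
    rw [hΦ x]
    have h1 : (∫ y in Set.Iic x, Real.exp (-y ^ 2 / 4)) ≤ ∫ y in Set.Iic x, Real.exp y := by
      apply setIntegral_mono_on hint.integrableOn (integrableOn_exp_Iic x) measurableSet_Iic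
      intro y hy
      have hy' : y ≤ -4 := le_trans hy hx
      apply Real.exp_le_exp.2
      nlinarith
    rw [integral_exp_Iic] at h1
    have hcle1 : c ≤ 1 := by
      have h4 : (1:ℝ) ≤ Real.sqrt (4 * Real.pi) := by
        rw [show (1:ℝ) = Real.sqrt 1 by simp]
        exact Real.sqrt_le_sqrt (by nlinarith [Real.pi_gt_three])
      nlinarith
    calc c * (∫ y in Set.Iic x, Real.exp (-y ^ 2 / 4)) ≤ c * Real.exp x := by
          exact mul_le_mul_of_nonneg_left h1 hc_pos.le
      _ ≤ 1 * Real.exp x := mul_le_mul_of_nonneg_right hcle1 (Real.exp_pos x).le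
      _ = Real.exp x := one_mul _
  -- upper bound by √2 exp(-x²/8), for x ≤ 0
  have phi_upper_sq : ∀ x : ℝ, x ≤ 0 → Φ x ≤ Real.sqrt 2 * Real.exp (-x ^ 2 / 8) := by
    intro x hx
    rw [hΦ x]
    have h1 : (∫ y in Set.Iic x, Real.exp (-y ^ 2 / 4))
        ≤ ∫ y in Set.Iic x, Real.exp (-x ^ 2 / 8) * Real.exp (-y ^ 2 / 8) := by
      apply setIntegral_mono_on hint.integrableOn
        ((hint8.const_mul (Real.exp (-x ^ 2 / 8))).integrableOn) measurableSet_Iic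
      intro y hy
      rw [← Real.exp_add]
      apply Real.exp_le_exp.2
      have : x ^ 2 ≤ y ^ 2 := by nlinarith [hy.out]
      nlinarith
    have h2 : (∫ y in Set.Iic x, Real.exp (-x ^ 2 / 8) * Real.exp (-y ^ 2 / 8))
        = Real.exp (-x ^ 2 / 8) * ∫ y in Set.Iic x, Real.exp (-y ^ 2 / 8) :=
      integral_const_mul _ _
    have h3 : (∫ y in Set.Iic x, Real.exp (-y ^ 2 / 8)) ≤ Real.sqrt (8 * Real.pi) := by
      rw [← htotal8]
      exact setIntegral_le_integral hint8 (Filter.Eventually.of_forall fun y => (Real.exp_pos _).le)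
    have h4 : Real.sqrt (8 * Real.pi) = Real.sqrt 2 * Real.sqrt (4 * Real.pi) := by
      rw [show (8:ℝ) * Real.pi = 2 * (4 * Real.pi) by ring,
        Real.sqrt_mul (by norm_num : (0:ℝ) ≤ 2)]
    have h12 : (∫ y in Set.Iic x, Real.exp (-y ^ 2 / 4))
        ≤ Real.exp (-x ^ 2 / 8) * Real.sqrt (8 * Real.pi) :=
      (h1.trans_eq h2).trans (mul_le_mul_of_nonneg_left h3 (Real.exp_pos _).le)
    calc c * (∫ y in Set.Iic x, Real.exp (-y ^ 2 / 4))
        ≤ c * (Real.exp (-x ^ 2 / 8) * Real.sqrt (8 * Real.pi)) :=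
          mul_le_mul_of_nonneg_left h12 hc_pos.le
      _ = Real.sqrt 2 * Real.exp (-x ^ 2 / 8) := by
          rw [h4, hcdef]; field_simp [ne_of_gt sqrt4pi_pos]
  -- lower bound, for x ≤ -1
  have phi_lower : ∀ x : ℝ, x ≤ -1 →
      c * ((-(1/x)) * (Real.exp (-(3:ℝ)/4) * Real.exp (-x ^ 2 / 4))) ≤ Φ x := by
    intro x hx
    have hxneg : x < 0 := by linarith
    have hxne : x ≠ 0 := ne_of_lt hxneg
    have hinv : -(1/x) > 0 := by
      have := div_neg_of_pos_of_neg one_pos hxneg; linarith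
    set u : ℝ := x + 1/x with hu
    have hux : u < x := by
      have : 1/x < 0 := by exact div_neg_of_pos_of_neg one_pos hxneg
      simp [hu]; linarith
    have hK : ∀ y ∈ Set.Ioc u x,
        Real.exp (-(3:ℝ)/4) * Real.exp (-x ^ 2 / 4) ≤ Real.exp (-y ^ 2 / 4) := by
      intro y hy
      rw [← Real.exp_add]
      apply Real.exp_le_exp.2
      have h1 : u ≤ y := hy.1.le
      have h2 : y ≤ x := hy.2
      have hx1 : x * x ≥ 1 := by nlinarith
      have hinv2 : (1/x) * (1/x) ≤ 1 := by
        rw [div_mul_div_comm, one_mul]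
        rw [div_le_one (by nlinarith)]
        nlinarith
      have hyu : y ^ 2 ≤ u ^ 2 := by nlinarith
      have hu2 : u ^ 2 ≤ x ^ 2 + 3 := by
        have hxx : x * (1/x) = 1 := mul_one_div_cancel hxne
        simp only [hu]
        nlinarith
      nlinarith
    have step1 : (∫ y in Set.Ioc u x, Real.exp (-(3:ℝ)/4) * Real.exp (-x ^ 2 / 4))
        ≤ ∫ y in Set.Ioc u x, Real.exp (-y ^ 2 / 4) := by
      apply setIntegral_mono_on _ (hint.integrableOn) measurableSet_Ioc hK
      exact integrableOn_const (by rw [Real.volume_Ioc]; exact ENNReal.ofReal_ne_top)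
    have step2 : (∫ y in Set.Ioc u x, Real.exp (-y ^ 2 / 4))
        ≤ ∫ y in Set.Iic x, Real.exp (-y ^ 2 / 4) := by
      apply setIntegral_mono_set hint.integrableOn
        (Filter.Eventually.of_forall fun y => (Real.exp_pos _).le)
      exact Filter.Eventually.of_forall fun y hy => Set.Ioc_subset_Iic_self hy
    have hconst : (∫ y in Set.Ioc u x, Real.exp (-(3:ℝ)/4) * Real.exp (-x ^ 2 / 4))
        = (-(1/x)) * (Real.exp (-(3:ℝ)/4) * Real.exp (-x ^ 2 / 4)) := by
      rw [setIntegral_const, measureReal_def, Real.volume_Ioc, ENNReal.toReal_ofReal (by linarith : (0:ℝ) ≤ x - u)]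
      simp only [hu, smul_eq_mul]
      ring
    rw [hΦ x]
    have := (hconst ▸ step1).trans step2
    exact mul_le_mul_of_nonneg_left this hc_pos.le
  -- surjectivity onto (0,1)
  have phi_small : ∀ ε : ℝ, 0 < ε → ∃ x : ℝ, Φ x < ε := by
    intro ε hε
    refine ⟨min (-4) (Real.log ε - 1), ?_⟩
    have h1 : Φ (min (-4) (Real.log ε - 1)) ≤ Real.exp (min (-4) (Real.log ε - 1)) :=
      phi_upper_exp _ (min_le_left _ _)
    have h2 : Real.exp (min (-4) (Real.log ε - 1)) ≤ Real.exp (Real.log ε - 1) :=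
      Real.exp_le_exp.2 (min_le_right _ _)
    have h3 : Real.exp (Real.log ε - 1) < ε := by
      rw [Real.exp_sub, Real.exp_log hε]
      apply div_lt_self hε
      nlinarith [Real.add_one_le_exp (1:ℝ)]
    linarith
  have phi_surj : ∀ a ∈ Set.Ioo (0:ℝ) 1, ∃ x : ℝ, Φ x = a := by
    intro a ha
    obtain ⟨u, hu⟩ := phi_small a ha.1
    obtain ⟨v', hv'⟩ := phi_small (1 - a) (by linarith [ha.2])
    have hv : a < Φ (-v') := by rw [phi_symm]; linarith
    have huv : u ≤ -v' := (phi_mono.lt_iff_lt.1 (lt_trans hu hv)).le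
    obtain ⟨x, _, hx⟩ := intermediate_value_Icc huv phi_cont.continuousOn ⟨hu.le, hv.le⟩
    exact ⟨x, hx⟩
  -- the constant
  refine ⟨4 * Real.exp ((3:ℝ)/4) + c / Φ (-3),
    add_pos (by positivity) (div_pos hc_pos (phi_pos _)), ?_⟩
  set C : ℝ := 4 * Real.exp ((3:ℝ)/4) + c / Φ (-3) with hCdef
  have hC2 : 0 < c / Φ (-3) := div_pos hc_pos (phi_pos _)
  -- key bound : F b ≤ C * (b * √(-log b)) on (0, 1/4)
  have keybound : ∀ b ∈ Set.Ioo (0:ℝ) (1/4 : ℝ),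
      F b ≤ C * (b * Real.sqrt (-Real.log b)) := by
    intro b hb
    obtain ⟨hb0, hb4⟩ := hb
    have hb1 : b ∈ Set.Ioo (0:ℝ) 1 := ⟨hb0, by linarith⟩
    set x : ℝ := Function.invFun Φ b with hxdef
    have hxb : Φ x = b := Function.invFun_eq (phi_surj b hb1)
    have hFb : F b = c * Real.exp (-x ^ 2 / 4) := by
      rw [hF b, ← hxdef, (hderiv x).deriv]
    have hL1 : 1 ≤ Real.sqrt (-Real.log b) := by
      rw [show (1:ℝ) = Real.sqrt 1 by simp]
      apply Real.sqrt_le_sqrt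
      have hlb : Real.log b < Real.log (1/4) := Real.log_lt_log hb0 hb4
      have h4 : Real.log (1/4) = -(2 * Real.log 2) := by
        rw [show (1/4 : ℝ) = (2:ℝ)^(-2 : ℤ) by norm_num]
        rw [Real.log_zpow]; push_cast; ring
      nlinarith [Real.log_two_gt_d9]
    have hL0 : 0 ≤ Real.sqrt (-Real.log b) := Real.sqrt_nonneg _
    rcases le_or_gt x (-3) with hx3 | hx3
    · -- tail regime
      have hxneg : x < 0 := by linarith
      have hlow := phi_lower x (by linarith)
      -- c e^{-x²/4} ≤ e^{3/4} (-x) Φ x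
      have hmain : c * Real.exp (-x ^ 2 / 4) ≤ Real.exp ((3:ℝ)/4) * (-x) * b := by
        have hnn : (0:ℝ) ≤ Real.exp ((3:ℝ)/4) * (-x) :=
          mul_nonneg (Real.exp_pos _).le (by linarith)
        have h2 := mul_le_mul_of_nonneg_left hlow hnn
        rw [hxb] at h2
        refine le_trans (le_of_eq ?_) h2
        have he : Real.exp (-(3:ℝ)/4) * Real.exp ((3:ℝ)/4) = 1 := by
          rw [← Real.exp_add]; norm_num
        have hxne : x ≠ 0 := ne_of_lt hxneg
        have hx1 : (-x) * (-(1/x)) = 1 := by field_simp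
        calc c * Real.exp (-x ^ 2 / 4)
            = ((-x) * (-(1/x))) * (Real.exp (-(3:ℝ)/4) * Real.exp ((3:ℝ)/4))
              * (c * Real.exp (-x ^ 2 / 4)) := by rw [hx1, he]; ring
          _ = Real.exp ((3:ℝ)/4) * (-x)
              * (c * ((-(1/x)) * (Real.exp (-(3:ℝ)/4) * Real.exp (-x ^ 2 / 4)))) := by ring
      -- -x ≤ 4 √(-log b)
      have hxle : -x ≤ 4 * Real.sqrt (-Real.log b) := by
        have hup := phi_upper_sq x (by linarith)
        rw [hxb] at hup
        have hlog : Real.log b ≤ Real.log (Real.sqrt 2 * Real.exp (-x ^ 2 / 8)) :=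
          Real.log_le_log hb0 hup
        rw [Real.log_mul (by positivity) (Real.exp_ne_zero _), Real.log_exp,
          Real.log_sqrt (by norm_num : (0:ℝ) ≤ 2)] at hlog
        have hx2 : x ^ 2 / 16 ≤ -Real.log b := by
          nlinarith [Real.log_two_lt_d9, sq_nonneg (x + 3)]
        have h5 : -x / 4 ≤ Real.sqrt (-Real.log b) := by
          rw [Real.le_sqrt (by linarith) (by nlinarith)]
          nlinarith
        linarith
      have hstep : Real.exp ((3:ℝ)/4) * (-x) * b
          ≤ 4 * Real.exp ((3:ℝ)/4) * (b * Real.sqrt (-Real.log b)) := by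
        calc Real.exp ((3:ℝ)/4) * (-x) * b
            = (Real.exp ((3:ℝ)/4) * b) * (-x) := by ring
          _ ≤ (Real.exp ((3:ℝ)/4) * b) * (4 * Real.sqrt (-Real.log b)) :=
            mul_le_mul_of_nonneg_left hxle (mul_nonneg (Real.exp_pos _).le hb0.le)
          _ = 4 * Real.exp ((3:ℝ)/4) * (b * Real.sqrt (-Real.log b)) := by ring
      have hCge : 4 * Real.exp ((3:ℝ)/4) * (b * Real.sqrt (-Real.log b))
          ≤ C * (b * Real.sqrt (-Real.log b)) := by
        apply mul_le_mul_of_nonneg_right _ (mul_nonneg hb0.le hL0)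
        rw [hCdef]; linarith [hC2]
      rw [hFb]; linarith
    · -- bulk regime
      have hblow : Φ (-3) ≤ b := by
        rw [← hxb]; exact (phi_mono.le_iff_le.2 hx3.le)
      have hFle : F b ≤ c := by
        rw [hFb]
        nlinarith [Real.exp_le_one_iff.2 (show -x ^ 2 / 4 ≤ 0 by nlinarith [sq_nonneg x]), hc_pos]
      have h6 : c ≤ (c / Φ (-3)) * (b * Real.sqrt (-Real.log b)) := by
        have h7 : Φ (-3) * 1 ≤ b * Real.sqrt (-Real.log b) := by
          nlinarith [phi_pos (-3), mul_nonneg hb0.le (sub_nonneg.2 hL1)]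
        calc c = (c / Φ (-3)) * (Φ (-3) * 1) := by
              field_simp [ne_of_gt (phi_pos (-3))]
          _ ≤ (c / Φ (-3)) * (b * Real.sqrt (-Real.log b)) :=
              mul_le_mul_of_nonneg_left h7 hC2.le
      rw [hCdef]
      nlinarith [mul_nonneg (mul_nonneg (by positivity : (0:ℝ) ≤ 4 * Real.exp ((3:ℝ)/4)) hb0.le) hL0]
  -- symmetry of F
  have Fsymm : ∀ b ∈ Set.Ioo (0:ℝ) 1, F (1 - b) = F b := by
    intro b hb
    have hb1 : (1 - b) ∈ Set.Ioo (0:ℝ) 1 := ⟨by linarith [hb.2], by linarith [hb.1]⟩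
    have hinv : Function.invFun Φ (1 - b) = -(Function.invFun Φ b) := by
      apply phi_mono.injective
      rw [Function.invFun_eq (phi_surj _ hb1), phi_symm, Function.invFun_eq (phi_surj _ hb)]
    rw [hF, hF, hinv, (hderiv _).deriv, (hderiv _).deriv, neg_sq]
  -- main argument
  intro h _ _ hcond a ha
  obtain ⟨ha0, ha4⟩ := ha
  have ha1 : a ∈ Set.Ioo (0:ℝ) 1 := ⟨ha0, by linarith⟩
  obtain ⟨hA, hB, _, _⟩ := hcond a ha1
  have hb1 : (1 - a) ∈ Set.Ioo (0:ℝ) 1 := ⟨by linarith, by linarith⟩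
  obtain ⟨_, _, hCc, hD⟩ := hcond (1 - a) hb1
  have hkey : F a ≤ C * (a * Real.sqrt (-Real.log a)) := keybound a ⟨ha0, ha4⟩
  have hL0 : 0 ≤ Real.sqrt (-Real.log a) := Real.sqrt_nonneg _
  constructor
  · have h1 : a * h a ≤ a * (C * Real.sqrt (-Real.log a)) := by
      calc a * h a ≤ F a := hA.trans hB
        _ ≤ C * (a * Real.sqrt (-Real.log a)) := hkey
        _ = a * (C * Real.sqrt (-Real.log a)) := by ring
    exact le_of_mul_le_mul_left h1 ha0
  · have hFs : F (1 - a) = F a := Fsymm a ha1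
    have h1 : a * (-(C * Real.sqrt (-Real.log a))) ≤ a * h (1 - a) := by
      have h2 : -(F (1 - a)) ≤ (1 - (1 - a)) * h (1 - a) := hCc.trans hD
      rw [hFs] at h2
      have h3 : (1 - (1 - a)) * h (1 - a) = a * h (1 - a) := by ring
      rw [h3] at h2
      calc a * (-(C * Real.sqrt (-Real.log a)))
          = -(C * (a * Real.sqrt (-Real.log a))) := by ring
        _ ≤ -(F a) := by linarith
        _ ≤ a * h (1 - a) := h2
    exact le_of_mul_le_mul_left h1 ha0
end

section
/- Let r : [τ₀ − r₀², τ₀ + r₀²] → (0, ∞) be a differentiable function of τ with r(τ₀) = r₀ ≤ c₀√τ₀ for some c₀ ∈ (0, 1/2), and suppose |d/dτ log(r(τ)/√τ)| ≤ C/τ whenever r(τ) < c₀√τ. If c₀ is small enough (depending only on C), then r(τ) ≥ (4/5) r₀ for all τ ∈ [τ₀ − r₀², τ₀ + r₀²]. -/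
open Set Real

set_option maxHeartbeats 1000000

/-- Abstract time-direction scale comparability (Lemma 2.5): if
|d/dτ log(r(τ)/√τ)| ≤ C/τ wherever r(τ) < c₀√τ, and r(τ₀) = r₀ ≤ c₀√τ₀, then for c₀
small enough depending only on C, r(τ) ≥ (4/5) r₀ on [τ₀ − r₀², τ₀ + r₀²]. -/
theorem scale_comparability_in_time :
    ∀ C : ℝ, 0 < C → ∃ δ : ℝ, 0 < δ ∧
      ∀ c₀ ∈ Set.Ioo (0:ℝ) (1/2), c₀ ≤ δ →
      ∀ (τ₀ r₀ : ℝ) (r : ℝ → ℝ), 0 < τ₀ → 0 < r₀ →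
      (∀ τ ∈ Set.Icc (τ₀ - r₀ ^ 2) (τ₀ + r₀ ^ 2), DifferentiableAt ℝ r τ ∧ 0 < r τ) →
      r τ₀ = r₀ → r₀ ≤ c₀ * Real.sqrt τ₀ →
      (∀ τ ∈ Set.Icc (τ₀ - r₀ ^ 2) (τ₀ + r₀ ^ 2), r τ < c₀ * Real.sqrt τ →
        |deriv (fun s => Real.log (r s / Real.sqrt s)) τ| ≤ C / τ) →
      ∀ τ ∈ Set.Icc (τ₀ - r₀ ^ 2) (τ₀ + r₀ ^ 2), (4/5) * r₀ ≤ r τ := by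
  intro C hC
  refine ⟨min (1/10) (1/(10*(C+1))), lt_min (by norm_num) (by positivity), ?_⟩
  intro c₀ hc₀mem hc₀δ τ₀ r₀ r hτ₀ hr₀ hdiff hrτ₀ hr₀le hderiv
  obtain ⟨hc₀pos, hc₀half⟩ := hc₀mem
  have hτ₀ne : τ₀ ≠ 0 := hτ₀.ne'
  set I : Set ℝ := Icc (τ₀ - r₀ ^ 2) (τ₀ + r₀ ^ 2) with hIdef
  set m : ℝ := (9/10) * r₀ with hm
  set g : ℝ → ℝ := fun s => Real.log (r s / Real.sqrt s) with hg
  -- numeric bounds on c₀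
  have hc₀1 : c₀ ≤ 1/10 := le_trans hc₀δ (min_le_left _ _)
  have hc₀2 : c₀ ≤ 1/(10*(C+1)) := le_trans hc₀δ (min_le_right _ _)
  have hc₀sq : c₀ ^ 2 ≤ 1/100 := by nlinarith
  have hCc₀ : C * c₀ ≤ 1/10 := by
    have h1 : c₀ * (10*(C+1)) ≤ 1 := (le_div_iff₀ (by positivity)).1 hc₀2
    nlinarith
  have hCc₀sq : C * c₀ ^ 2 ≤ 1/100 := by nlinarith
  -- r₀² ≤ c₀² τ₀
  have hsqτ₀ : Real.sqrt τ₀ ^ 2 = τ₀ := Real.sq_sqrt hτ₀.le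
  have hr₀sq : r₀ ^ 2 ≤ c₀ ^ 2 * τ₀ := by nlinarith [Real.sqrt_nonneg τ₀]
  -- interval bounds
  have hτlow : ∀ τ ∈ I, (99/100) * τ₀ ≤ τ := by
    intro τ hτ
    have := hτ.1
    nlinarith
  have hτhigh : ∀ τ ∈ I, τ ≤ (101/100) * τ₀ := by
    intro τ hτ
    have := hτ.2
    nlinarith
  have hτpos : ∀ τ ∈ I, 0 < τ := fun τ hτ =>
    lt_of_lt_of_le (by linarith : (0:ℝ) < (99/100) * τ₀) (hτlow τ hτ)
  -- threshold: m < c₀ √τ on I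
  have hthresh : ∀ τ ∈ I, m < c₀ * Real.sqrt τ := by
    intro τ hτ
    have hτp := hτpos τ hτ
    have hsq : Real.sqrt τ ^ 2 = τ := Real.sq_sqrt hτp.le
    have h1 : (99/100) * τ₀ ≤ τ := hτlow τ hτ
    have h2 : m ^ 2 < (c₀ * Real.sqrt τ) ^ 2 := by
      rw [hm]
      nlinarith [mul_le_mul_of_nonneg_left h1 (sq_nonneg c₀), hsq]
    exact lt_of_pow_lt_pow_left₀ 2 (by positivity) h2
  -- continuity of r on I
  have hrcont : ContinuousOn r I := fun τ hτ =>
    ((hdiff τ hτ).1.continuousAt).continuousWithinAt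
  -- differentiability of g on I
  have hgdiff : ∀ τ ∈ I, DifferentiableAt ℝ g τ := by
    intro τ hτ
    have hτp := hτpos τ hτ
    have hrpos := (hdiff τ hτ).2
    have hsp : (0:ℝ) < Real.sqrt τ := Real.sqrt_pos.2 hτp
    have h1 : DifferentiableAt ℝ (fun s => r s / Real.sqrt s) τ :=
      (hdiff τ hτ).1.div (Real.hasDerivAt_sqrt hτp.ne').differentiableAt hsp.ne'
    exact h1.log (by positivity)
  -- MVT bound
  have key : ∀ a b, a ∈ I → b ∈ I → a ≤ b →
      (∀ τ ∈ Icc a b, r τ < c₀ * Real.sqrt τ) →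
      |g b - g a| ≤ 3 * C * c₀ ^ 2 := by
    intro a b ha hb hab hsmall
    have hsub : Icc a b ⊆ I := Icc_subset_Icc ha.1 hb.2
    have hbound : ∀ τ ∈ Icc a b, ‖deriv g τ‖ ≤ C / ((99/100) * τ₀) := by
      intro τ hτ
      have hτI := hsub hτ
      have h1 : |deriv g τ| ≤ C / τ := hderiv τ hτI (hsmall τ hτ)
      have h2 : C / τ ≤ C / ((99/100) * τ₀) :=
        div_le_div_of_nonneg_left hC.le (by linarith) (hτlow τ hτI)
      calc ‖deriv g τ‖ = |deriv g τ| := Real.norm_eq_abs _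
        _ ≤ C / τ := h1
        _ ≤ _ := h2
    have hmvt := Convex.norm_image_sub_le_of_norm_deriv_le
      (fun x hx => hgdiff x (hsub hx)) hbound (convex_Icc a b)
      (left_mem_Icc.2 hab) (right_mem_Icc.2 hab)
    have hlen : b - a ≤ 2 * (c₀ ^ 2 * τ₀) := by
      have h1 := ha.1; have h2 := hb.2; nlinarith
    have hnorm : ‖b - a‖ = b - a := by
      rw [Real.norm_eq_abs, abs_of_nonneg (by linarith)]
    calc |g b - g a| = ‖g b - g a‖ := (Real.norm_eq_abs _).symm
      _ ≤ C / ((99/100) * τ₀) * ‖b - a‖ := hmvt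
      _ ≤ C / ((99/100) * τ₀) * (2 * (c₀ ^ 2 * τ₀)) := by
          apply mul_le_mul_of_nonneg_left _ (by positivity)
          rw [hnorm]; exact hlen
      _ = (200/99) * C * c₀ ^ 2 := by
          rw [div_mul_eq_mul_div, div_eq_iff (show (99/100) * τ₀ ≠ 0 by positivity)]
          ring
      _ ≤ 3 * C * c₀ ^ 2 := by nlinarith [mul_nonneg hC.le (sq_nonneg c₀)]
  -- crossing point
  have crossing : ∀ τ₁ ∈ I, r τ₁ < m →
      ∃ σ ∈ I, r σ = m ∧ |g τ₁ - g σ| ≤ 3 * C * c₀ ^ 2 := by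
    intro τ₁ hτ₁ hrτ₁
    have hτ₀I : τ₀ ∈ I := ⟨by nlinarith [sq_nonneg r₀], by nlinarith [sq_nonneg r₀]⟩
    have hmr₀ : m < r₀ := by rw [hm]; nlinarith
    rcases le_total τ₀ τ₁ with hord | hord
    · -- σ := sSup {x ∈ [τ₀, τ₁] | r x = m}
      have hsubI : Icc τ₀ τ₁ ⊆ I := Icc_subset_Icc hτ₀I.1 hτ₁.2
      have hcont' : ContinuousOn r (Icc τ₀ τ₁) := hrcont.mono hsubI
      have hA : (Icc τ₀ τ₁ ∩ r ⁻¹' {m}).Nonempty := by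
        obtain ⟨x, hx, hrx⟩ := intermediate_value_Icc' hord hcont'
          (show m ∈ Icc (r τ₁) (r τ₀) from ⟨hrτ₁.le, by rw [hrτ₀]; exact hmr₀.le⟩)
        exact ⟨x, hx, hrx⟩
      have hAclosed : IsClosed (Icc τ₀ τ₁ ∩ r ⁻¹' {m}) :=
        hcont'.preimage_isClosed_of_isClosed isClosed_Icc isClosed_singleton
      have hAbdd : BddAbove (Icc τ₀ τ₁ ∩ r ⁻¹' {m}) :=
        BddAbove.mono inter_subset_left bddAbove_Icc
      set σ := sSup (Icc τ₀ τ₁ ∩ r ⁻¹' {m}) with hσ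
      have hσmem : σ ∈ Icc τ₀ τ₁ ∩ r ⁻¹' {m} := hAclosed.csSup_mem hA hAbdd
      have hσI : σ ∈ I := hsubI hσmem.1
      have hrσ : r σ = m := hσmem.2
      have hσle : σ ≤ τ₁ := hσmem.1.2
      have hsmall : ∀ τ ∈ Icc σ τ₁, r τ < c₀ * Real.sqrt τ := by
        intro τ hτ
        have hτI : τ ∈ I := hsubI ⟨le_trans hσmem.1.1 hτ.1, hτ.2⟩
        have hle : r τ ≤ m := by
          by_contra hcon
          push_neg at hcon
          have hcont'' : ContinuousOn r (Icc τ τ₁) :=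
            hcont'.mono (Icc_subset_Icc (le_trans hσmem.1.1 hτ.1) le_rfl)
          obtain ⟨x, hx, hrx⟩ := intermediate_value_Icc' hτ.2 hcont''
            (show m ∈ Icc (r τ₁) (r τ) from ⟨hrτ₁.le, hcon.le⟩)
          have hxA : x ∈ Icc τ₀ τ₁ ∩ r ⁻¹' {m} :=
            ⟨⟨le_trans (le_trans hσmem.1.1 hτ.1) hx.1, hx.2⟩, hrx⟩
          have hxσ : x ≤ σ := le_csSup hAbdd hxA
          have hxτ : x = τ := le_antisymm (hxσ.trans hτ.1) hx.1
          rw [hxτ] at hrx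
          linarith
        exact lt_of_le_of_lt hle (hthresh τ hτI)
      exact ⟨σ, hσI, hrσ, key σ τ₁ hσI hτ₁ hσle hsmall⟩
    · -- σ := sInf {x ∈ [τ₁, τ₀] | r x = m}
      have hsubI : Icc τ₁ τ₀ ⊆ I := Icc_subset_Icc hτ₁.1 hτ₀I.2
      have hcont' : ContinuousOn r (Icc τ₁ τ₀) := hrcont.mono hsubI
      have hA : (Icc τ₁ τ₀ ∩ r ⁻¹' {m}).Nonempty := by
        obtain ⟨x, hx, hrx⟩ := intermediate_value_Icc hord hcont'
          (show m ∈ Icc (r τ₁) (r τ₀) from ⟨hrτ₁.le, by rw [hrτ₀]; exact hmr₀.le⟩)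
        exact ⟨x, hx, hrx⟩
      have hAclosed : IsClosed (Icc τ₁ τ₀ ∩ r ⁻¹' {m}) :=
        hcont'.preimage_isClosed_of_isClosed isClosed_Icc isClosed_singleton
      have hAbdd : BddBelow (Icc τ₁ τ₀ ∩ r ⁻¹' {m}) :=
        BddBelow.mono inter_subset_left bddBelow_Icc
      set σ := sInf (Icc τ₁ τ₀ ∩ r ⁻¹' {m}) with hσ
      have hσmem : σ ∈ Icc τ₁ τ₀ ∩ r ⁻¹' {m} := hAclosed.csInf_mem hA hAbdd
      have hσI : σ ∈ I := hsubI hσmem.1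
      have hrσ : r σ = m := hσmem.2
      have hσge : τ₁ ≤ σ := hσmem.1.1
      have hsmall : ∀ τ ∈ Icc τ₁ σ, r τ < c₀ * Real.sqrt τ := by
        intro τ hτ
        have hτI : τ ∈ I := hsubI ⟨hτ.1, le_trans hτ.2 hσmem.1.2⟩
        have hle : r τ ≤ m := by
          by_contra hcon
          push_neg at hcon
          have hcont'' : ContinuousOn r (Icc τ₁ τ) :=
            hcont'.mono (Icc_subset_Icc le_rfl (le_trans hτ.2 hσmem.1.2))
          obtain ⟨x, hx, hrx⟩ := intermediate_value_Icc hτ.1 hcont''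
            (show m ∈ Icc (r τ₁) (r τ) from ⟨hrτ₁.le, hcon.le⟩)
          have hxA : x ∈ Icc τ₁ τ₀ ∩ r ⁻¹' {m} :=
            ⟨⟨hx.1, le_trans hx.2 (le_trans hτ.2 hσmem.1.2)⟩, hrx⟩
          have hxσ : σ ≤ x := csInf_le hAbdd hxA
          have hxτ : x = τ := le_antisymm hx.2 (hτ.2.trans hxσ)
          rw [hxτ] at hrx
          linarith
        exact lt_of_le_of_lt hle (hthresh τ hτI)
      have h := key τ₁ σ hτ₁ hσI hσge hsmall
      rw [abs_sub_comm] at h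
      exact ⟨σ, hσI, hrσ, h⟩
  -- final computation
  intro τ₁ hτ₁
  have hrτ₁pos := (hdiff τ₁ hτ₁).2
  rcases le_or_gt m (r τ₁) with hbig | hrτ₁
  · rw [hm] at hbig; linarith
  obtain ⟨σ, hσI, hrσ, habs⟩ := crossing τ₁ hτ₁ hrτ₁
  have hσpos := hτpos σ hσI
  have hτ₁pos' := hτpos τ₁ hτ₁
  have hsσ : (0:ℝ) < Real.sqrt σ := Real.sqrt_pos.2 hσpos
  have hs₁ : (0:ℝ) < Real.sqrt τ₁ := Real.sqrt_pos.2 hτ₁pos'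
  have hmpos : (0:ℝ) < m := by rw [hm]; linarith
  set B := 3 * C * c₀ ^ 2 with hB
  have hBpos : 0 ≤ B := by positivity
  have hBsmall : B ≤ 3/100 := by rw [hB]; nlinarith
  have hx : (0:ℝ) < r τ₁ / Real.sqrt τ₁ := by positivity
  have hy : (0:ℝ) < m / Real.sqrt σ := by positivity
  have hlog : -B ≤ Real.log ((r τ₁ / Real.sqrt τ₁) / (m / Real.sqrt σ)) := by
    rw [Real.log_div hx.ne' hy.ne']
    have hgτ₁ : g τ₁ = Real.log (r τ₁ / Real.sqrt τ₁) := rfl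
    have hgσ : g σ = Real.log (m / Real.sqrt σ) := by
      simp only [hg, hrσ]
    have h1 := (abs_le.1 habs).1
    rw [hgτ₁, hgσ] at h1
    linarith
  have hratio : 1 - B ≤ (r τ₁ / Real.sqrt τ₁) / (m / Real.sqrt σ) := by
    have h1 : Real.exp (-B) ≤ (r τ₁ / Real.sqrt τ₁) / (m / Real.sqrt σ) := by
      rw [← Real.exp_log (show (0:ℝ) < (r τ₁ / Real.sqrt τ₁) / (m / Real.sqrt σ)
        by positivity)]
      exact Real.exp_le_exp.2 hlog
    linarith [Real.add_one_le_exp (-B)]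
  -- √τ₁ ≥ (1 - c₀²) √σ
  have hc₀sq1 : (0:ℝ) ≤ 1 - c₀ ^ 2 := by linarith
  have hsqrt_ratio : (1 - c₀ ^ 2) * Real.sqrt σ ≤ Real.sqrt τ₁ := by
    have hσhi : σ ≤ (1 + c₀ ^ 2) * τ₀ := by
      have := hσI.2; nlinarith
    have hτ₁lo : (1 - c₀ ^ 2) * τ₀ ≤ τ₁ := by
      have := hτ₁.1; nlinarith
    have h1 : (1 - c₀ ^ 2) ^ 2 * σ ≤ τ₁ := by
      nlinarith [mul_le_mul_of_nonneg_left hσhi (sq_nonneg (1 - c₀ ^ 2)),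
        mul_nonneg (mul_nonneg hc₀sq1 (sq_nonneg c₀)) hτ₀.le]
    calc (1 - c₀ ^ 2) * Real.sqrt σ
        = Real.sqrt ((1 - c₀ ^ 2) ^ 2 * σ) := by
          rw [Real.sqrt_mul (sq_nonneg _), Real.sqrt_sq hc₀sq1]
      _ ≤ Real.sqrt τ₁ := Real.sqrt_le_sqrt h1
  -- put together
  have h1 : (1 - B) * (m / Real.sqrt σ) ≤ r τ₁ / Real.sqrt τ₁ :=
    (le_div_iff₀ hy).1 hratio
  have h2 : (1 - B) * (m / Real.sqrt σ) * Real.sqrt τ₁ ≤ r τ₁ := by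
    have := mul_le_mul_of_nonneg_right h1 hs₁.le
    rwa [div_mul_cancel₀ _ hs₁.ne'] at this
  have h3 : (1 - B) * (m / Real.sqrt σ) * ((1 - c₀ ^ 2) * Real.sqrt σ)
      ≤ (1 - B) * (m / Real.sqrt σ) * Real.sqrt τ₁ :=
    mul_le_mul_of_nonneg_left hsqrt_ratio
      (mul_nonneg (by linarith) hy.le)
  have h4 : (1 - B) * (m / Real.sqrt σ) * ((1 - c₀ ^ 2) * Real.sqrt σ)
      = m * (1 - c₀ ^ 2) * (1 - B) := by
    field_simp
  have hfin : m * (1 - c₀ ^ 2) * (1 - B) ≤ r τ₁ := by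
    rw [← h4]; linarith
  have : (4/5) * r₀ ≤ m * (1 - c₀ ^ 2) * (1 - B) := by
    rw [hm]
    nlinarith [mul_le_mul_of_nonneg_left hc₀sq hr₀.le,
      mul_le_mul_of_nonneg_left hBsmall hr₀.le,
      mul_nonneg (mul_nonneg hr₀.le hBpos) (sq_nonneg c₀)]
  linarith
end

section
/- Let ν be a probability measure, q : M → ℝ measurable with ∫ q dν = 0, and h its decreasing rearrangement on (0,1) with H(a) := ∫_0^a h satisfying H(0)=0, H(1)=0, H concave, and H(a) ≤ F(a) := Φ'(Φ^{-1}(a)) for all a ∈ (0,1). Then ∫_0^1 h(a)² da ≤ 1/2, and consequently ∫_M q² dν ≤ 1/2. -/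
open MeasureTheory Set Filter Topology

namespace BamlerAux

noncomputable def gc : ℝ := (Real.sqrt (4 * Real.pi))⁻¹

lemma sqrt4pi_pos : 0 < Real.sqrt (4 * Real.pi) :=
  Real.sqrt_pos.2 (by positivity)

lemma gc_pos : 0 < gc := inv_pos.2 sqrt4pi_pos

lemma gc_mul : gc * Real.sqrt (4 * Real.pi) = 1 := inv_mul_cancel₀ sqrt4pi_pos.ne'

lemma gauss_fun_eq : (fun y : ℝ => Real.exp (-4⁻¹ * y ^ 2)) = fun y => Real.exp (-y ^ 2 / 4) := by
  funext y; congr 1; ring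

lemma gauss_integrable : Integrable (fun y : ℝ => Real.exp (-y ^ 2 / 4)) := by
  rw [← gauss_fun_eq]
  exact integrable_exp_neg_mul_sq (by norm_num)

lemma gauss_int : ∫ y : ℝ, Real.exp (-y ^ 2 / 4) = Real.sqrt (4 * Real.pi) := by
  have h := integral_gaussian (4:ℝ)⁻¹
  rw [show Real.pi / (4:ℝ)⁻¹ = 4 * Real.pi by ring] at h
  rw [← h, ← gauss_fun_eq]

lemma gauss_sq_integrable : Integrable (fun y : ℝ => y ^ 2 * Real.exp (-y ^ 2 / 4)) := by
  have h8 : Integrable (fun y : ℝ => 8 * Real.exp (-8⁻¹ * y ^ 2)) :=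
    (integrable_exp_neg_mul_sq (b := (8:ℝ)⁻¹) (by norm_num)).const_mul 8
  refine h8.mono' ?_ (Eventually.of_forall fun y => ?_)
  · exact (continuous_pow 2 |>.mul (Real.continuous_exp.comp (by continuity))).aestronglyMeasurable
  · have h1 : y ^ 2 / 8 ≤ Real.exp (y ^ 2 / 8) := (Real.add_one_le_exp _).trans' (by nlinarith)
    have h2 : y ^ 2 ≤ 8 * Real.exp (y ^ 2 / 8) := by nlinarith [Real.exp_pos (y ^ 2 / 8)]
    have h3 : 0 ≤ y ^ 2 * Real.exp (-y ^ 2 / 4) := by positivity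
    rw [Real.norm_eq_abs, abs_of_nonneg h3]
    calc y ^ 2 * Real.exp (-y ^ 2 / 4) ≤ (8 * Real.exp (y ^ 2 / 8)) * Real.exp (-y ^ 2 / 4) := by
          apply mul_le_mul_of_nonneg_right h2 (Real.exp_pos _).le
      _ = 8 * Real.exp (-8⁻¹ * y ^ 2) := by
          rw [mul_assoc, ← Real.exp_add]; congr 2; ring

lemma gauss_mul_integrable : Integrable (fun y : ℝ => y * Real.exp (-y ^ 2 / 4)) := by
  have h := integrable_mul_exp_neg_mul_sq (b := (4:ℝ)⁻¹) (by norm_num)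
  refine h.congr (Eventually.of_forall fun y => ?_)
  simp only []; congr 1; congr 1; ring

lemma gauss_deriv (y : ℝ) :
    HasDerivAt (fun y : ℝ => Real.exp (-y ^ 2 / 4)) (-y / 2 * Real.exp (-y ^ 2 / 4)) y := by
  have h1 : HasDerivAt (fun y : ℝ => -y ^ 2 / 4) (-y / 2) y := by
    have := ((hasDerivAt_pow 2 y).neg).div_const 4
    refine this.congr_deriv ?_
    simp; ring
  have h2 := (Real.hasDerivAt_exp (-y ^ 2 / 4)).comp y h1
  refine h2.congr_deriv ?_
  ring

lemma tendsto_gauss_decay_top (c : ℝ) : Tendsto (fun y : ℝ => c * y * Real.exp (-y ^ 2 / 4))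
    atTop (𝓝 0) := by
  have hcomp : Tendsto (fun y : ℝ => y ^ 2 / 4) atTop atTop := by
    apply Tendsto.atTop_div_const (by norm_num)
    exact tendsto_pow_atTop (by norm_num)
  have base : Tendsto (fun y : ℝ => (y ^ 2 / 4) * Real.exp (-(y ^ 2 / 4))) atTop (𝓝 0) := by
    have h := (Real.tendsto_pow_mul_exp_neg_atTop_nhds_zero 1).comp hcomp
    simpa [Function.comp_def] using h
  have base' : Tendsto (fun y : ℝ => |c| * ((y ^ 2 / 4) * Real.exp (-(y ^ 2 / 4)))) atTop
      (𝓝 0) := by simpa using base.const_mul |c|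
  apply squeeze_zero_norm' _ base'
  filter_upwards [eventually_ge_atTop (4:ℝ)] with y hy
  have hy0 : (0:ℝ) ≤ y := by linarith
  have h1 : y ≤ y ^ 2 / 4 := by nlinarith
  have h2 : Real.exp (-y ^ 2 / 4) = Real.exp (-(y ^ 2 / 4)) := by congr 1; ring
  rw [norm_mul, norm_mul, Real.norm_eq_abs, Real.norm_eq_abs, Real.norm_eq_abs,
    abs_of_nonneg hy0, Real.abs_exp, h2, mul_assoc]
  apply mul_le_mul_of_nonneg_left _ (abs_nonneg c)
  exact mul_le_mul_of_nonneg_right h1 (Real.exp_pos _).le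

lemma tendsto_gauss_decay_bot (c : ℝ) : Tendsto (fun y : ℝ => c * y * Real.exp (-y ^ 2 / 4))
    atBot (𝓝 0) := by
  have h := (tendsto_gauss_decay_top (-c)).comp tendsto_neg_atBot_atTop
  refine h.congr fun y => ?_
  simp only [Function.comp]
  rw [show (-y) ^ 2 = y ^ 2 by ring]
  ring

lemma gauss_sq_int : ∫ y : ℝ, y ^ 2 * Real.exp (-y ^ 2 / 4) = 2 * Real.sqrt (4 * Real.pi) := by
  have hderiv : ∀ y : ℝ, HasDerivAt (fun y : ℝ => -2 * y * Real.exp (-y ^ 2 / 4))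
      (y ^ 2 * Real.exp (-y ^ 2 / 4) - 2 * Real.exp (-y ^ 2 / 4)) y := by
    intro y
    have h3 := ((hasDerivAt_id y).const_mul (-2:ℝ)).mul (gauss_deriv y)
    refine h3.congr_deriv ?_
    simp [id]; ring
  have hint : Integrable (fun y : ℝ =>
      y ^ 2 * Real.exp (-y ^ 2 / 4) - 2 * Real.exp (-y ^ 2 / 4)) :=
    gauss_sq_integrable.sub (gauss_integrable.const_mul 2)
  have hbot : Tendsto (fun y : ℝ => -2 * y * Real.exp (-y ^ 2 / 4)) atBot (𝓝 0) :=
    tendsto_gauss_decay_bot (-2)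
  have htop : Tendsto (fun y : ℝ => -2 * y * Real.exp (-y ^ 2 / 4)) atTop (𝓝 0) :=
    tendsto_gauss_decay_top (-2)
  have key := integral_of_hasDerivAt_of_tendsto hderiv hint hbot htop
  rw [sub_zero] at key
  have h2 := integral_sub gauss_sq_integrable (gauss_integrable.const_mul 2)
  rw [key] at h2
  have h3 : ∫ y : ℝ, 2 * Real.exp (-y ^ 2 / 4) = 2 * Real.sqrt (4 * Real.pi) := by
    rw [integral_const_mul, gauss_int]
  linarith [h2, h3]

section Phi

variable {Φ : ℝ → ℝ}
  (hΦ : ∀ x : ℝ, Φ x = (Real.sqrt (4 * Real.pi))⁻¹ * ∫ y in Set.Iic x, Real.exp (-y ^ 2 / 4))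

include hΦ

lemma phi_hasDerivAt (x : ℝ) : HasDerivAt Φ (gc * Real.exp (-x ^ 2 / 4)) x := by
  have heq : Φ = fun x => (gc * ∫ y in Iic (0:ℝ), Real.exp (-y ^ 2 / 4))
      + gc * ∫ y in (0:ℝ)..x, Real.exp (-y ^ 2 / 4) := by
    funext x
    rw [hΦ x]
    have := intervalIntegral.integral_Iic_sub_Iic
      (gauss_integrable.integrableOn (s := Iic (0:ℝ))) (gauss_integrable.integrableOn (s := Iic x))
    rw [gc]
    rw [← this]
    ring
  rw [heq]
  have h1 : HasDerivAt (fun u : ℝ => ∫ y in (0:ℝ)..u, Real.exp (-y ^ 2 / 4))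
      (Real.exp (-x ^ 2 / 4)) x := by
    apply intervalIntegral.integral_hasDerivAt_right
      gauss_integrable.intervalIntegrable
      ((Real.continuous_exp.comp (by continuity)).stronglyMeasurableAtFilter _ _)
      ((Real.continuous_exp.comp (by continuity)).continuousAt)
  exact (h1.const_mul gc).const_add (gc * ∫ y in Iic (0:ℝ), Real.exp (-y ^ 2 / 4))

lemma phi_cont : Continuous Φ := by
  have : Differentiable ℝ Φ := fun x => (phi_hasDerivAt hΦ x).differentiableAt
  exact this.continuous

lemma phi_strictMono : StrictMono Φ := by
  apply strictMono_of_deriv_pos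
  intro x
  rw [(phi_hasDerivAt hΦ x).deriv]
  have := gc_pos
  positivity

lemma phi_pos (x : ℝ) : 0 < Φ x := by
  rw [hΦ x]
  apply mul_pos (by rw [← gc]; exact gc_pos)
  rw [setIntegral_pos_iff_support_of_nonneg_ae]
  · have : (Function.support fun y : ℝ => Real.exp (-y ^ 2 / 4)) = univ := by
      ext y; simp [Function.support, (Real.exp_pos _).ne']
    rw [this, univ_inter]
    simp
  · exact Eventually.of_forall fun y => (Real.exp_pos _).le
  · exact gauss_integrable.integrableOn

lemma phi_lt_one (x : ℝ) : Φ x < 1 := by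
  have hsplit : (∫ y in Iic x, Real.exp (-y ^ 2 / 4))
      + ∫ y in Ioi x, Real.exp (-y ^ 2 / 4) = Real.sqrt (4 * Real.pi) := by
    rw [← gauss_int]
    have := integral_add_compl (measurableSet_Iic (a := x)) gauss_integrable
    rwa [compl_Iic] at this
  have hpos : 0 < ∫ y in Ioi x, Real.exp (-y ^ 2 / 4) := by
    rw [setIntegral_pos_iff_support_of_nonneg_ae]
    · have : (Function.support fun y : ℝ => Real.exp (-y ^ 2 / 4)) = univ := by
        ext y; simp [Function.support, (Real.exp_pos _).ne']
      rw [this, univ_inter]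
      simp
    · exact Eventually.of_forall fun y => (Real.exp_pos _).le
    · exact gauss_integrable.integrableOn
  rw [hΦ x]
  have hlt : (∫ y in Iic x, Real.exp (-y ^ 2 / 4)) < Real.sqrt (4 * Real.pi) := by linarith
  calc (Real.sqrt (4 * Real.pi))⁻¹ * ∫ y in Iic x, Real.exp (-y ^ 2 / 4)
      < (Real.sqrt (4 * Real.pi))⁻¹ * Real.sqrt (4 * Real.pi) :=
        mul_lt_mul_of_pos_left hlt (inv_pos.2 sqrt4pi_pos)
    _ = 1 := inv_mul_cancel₀ sqrt4pi_pos.ne' 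

lemma phi_tendsto_top : Filter.Tendsto Φ Filter.atTop (nhds 1) := by
  have h : Filter.Tendsto (fun x : ℝ => ∫ y in Iic x, Real.exp (-y ^ 2 / 4)) Filter.atTop
      (nhds (∫ y in ⋃ x : ℝ, Iic x, Real.exp (-y ^ 2 / 4))) :=
    tendsto_setIntegral_of_monotone (fun x => measurableSet_Iic)
      (fun a b hab => Iic_subset_Iic.2 hab) (by rw [iUnion_Iic]; exact gauss_integrable.integrableOn)
  rw [iUnion_Iic, setIntegral_univ, gauss_int] at h
  have h2 := h.const_mul gc
  rw [gc_mul] at h2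
  refine h2.congr fun x => ?_
  rw [hΦ x, gc]

lemma phi_tendsto_bot : Filter.Tendsto Φ Filter.atBot (nhds 0) := by
  have h : Filter.Tendsto (fun x : ℝ => ∫ y in Iic (-x), Real.exp (-y ^ 2 / 4)) Filter.atTop
      (nhds (∫ y in ⋂ x : ℝ, Iic (-x), Real.exp (-y ^ 2 / 4))) := by
    apply tendsto_setIntegral_of_antitone (fun x => measurableSet_Iic)
    · intro a b hab
      exact Iic_subset_Iic.2 (by linarith)
    · exact ⟨0, gauss_integrable.integrableOn⟩
  have hempty : (⋂ x : ℝ, Iic (-x)) = (∅ : Set ℝ) := by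
    ext y
    simp only [mem_iInter, mem_Iic, mem_empty_iff_false, iff_false, not_forall, not_le]
    exact ⟨-(y - 1), by linarith⟩
  rw [hempty] at h
  simp only [Measure.restrict_empty, integral_zero_measure] at h
  have h2 : Filter.Tendsto (fun x : ℝ => Φ (-x)) Filter.atTop (nhds 0) := by
    have := h.const_mul gc
    simp only [mul_zero] at this
    refine this.congr fun x => ?_
    rw [hΦ (-x), gc]
  have h3 := h2.comp (tendsto_neg_atBot_atTop : Filter.Tendsto (fun x : ℝ => -x) Filter.atBot Filter.atTop)
  refine h3.congr fun x => ?_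
  simp [Function.comp, neg_neg]

lemma phi_surj {s : ℝ} (hs : s ∈ Ioo (0:ℝ) 1) : ∃ x, Φ x = s := by
  obtain ⟨x₀, hx₀⟩ : ∃ x₀, Φ x₀ < s := by
    have := (phi_tendsto_bot hΦ).eventually_lt_const hs.1
    exact this.exists
  obtain ⟨x₁, hx₁⟩ : ∃ x₁, s < Φ x₁ := by
    have := (phi_tendsto_top hΦ).eventually_const_lt hs.2
    exact this.exists
  have hle : x₀ ≤ x₁ := by
    by_contra hcon
    push_neg at hcon
    exact absurd ((phi_strictMono hΦ).lt_iff_lt.2 hcon) (by linarith [hx₀, hx₁])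
  have := intermediate_value_Icc hle (phi_cont hΦ).continuousOn
  obtain ⟨x, _, hx⟩ := this ⟨le_of_lt hx₀, le_of_lt hx₁⟩
  exact ⟨x, hx⟩

lemma phi_range : Set.range Φ = Ioo 0 1 := by
  ext s
  constructor
  · rintro ⟨x, rfl⟩
    exact ⟨phi_pos hΦ x, phi_lt_one hΦ x⟩
  · intro hs
    exact phi_surj hΦ hs

lemma phi_image_Iio (x : ℝ) : Φ '' (Iio x) = Ioo 0 (Φ x) := by
  ext s
  constructor
  · rintro ⟨y, hy, rfl⟩
    exact ⟨phi_pos hΦ y, (phi_strictMono hΦ) hy⟩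
  · intro hs
    obtain ⟨y, rfl⟩ := phi_surj hΦ ⟨hs.1, hs.2.trans (phi_lt_one hΦ x)⟩
    exact ⟨y, (phi_strictMono hΦ).lt_iff_lt.1 hs.2, rfl⟩

lemma phi_image_Ioi (x : ℝ) : Φ '' (Ioi x) = Ioo (Φ x) 1 := by
  ext s
  constructor
  · rintro ⟨y, hy, rfl⟩
    exact ⟨(phi_strictMono hΦ) hy, phi_lt_one hΦ y⟩
  · intro hs
    obtain ⟨y, rfl⟩ := phi_surj hΦ ⟨(phi_pos hΦ x).trans hs.1, hs.2⟩
    exact ⟨y, (phi_strictMono hΦ).lt_iff_lt.1 hs.1, rfl⟩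

lemma phi_image_univ : Φ '' univ = Ioo 0 1 := by
  rw [image_univ, phi_range hΦ]

end Phi
section Psi

variable {Φ : ℝ → ℝ}
  (hΦ : ∀ x : ℝ, Φ x = (Real.sqrt (4 * Real.pi))⁻¹ * ∫ y in Set.Iic x, Real.exp (-y ^ 2 / 4))

include hΦ

lemma psi_phi (x : ℝ) : Function.invFun Φ (Φ x) = x :=
  Function.leftInverse_invFun (phi_strictMono hΦ).injective x

lemma phi_psi {s : ℝ} (hs : s ∈ Ioo (0:ℝ) 1) : Φ (Function.invFun Φ s) = s :=
  Function.invFun_eq (phi_surj hΦ hs)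

lemma psi_monotoneOn : MonotoneOn (Function.invFun Φ) (Ioo (0:ℝ) 1) := by
  intro a ha b hb hab
  have h1 : Φ (Function.invFun Φ a) = a := phi_psi hΦ ha
  have h2 : Φ (Function.invFun Φ b) = b := phi_psi hΦ hb
  by_contra hcon
  push_neg at hcon
  have := (phi_strictMono hΦ) hcon
  rw [h1, h2] at this
  exact absurd this (not_lt.2 hab)

omit hΦ
lemma gauss_tendsto_bot : Filter.Tendsto (fun y : ℝ => gc * Real.exp (-y ^ 2 / 4))
    Filter.atBot (nhds 0) := by
  have h1 : Filter.Tendsto (fun y : ℝ => y ^ 2 / 4) Filter.atBot Filter.atTop := by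
    have h2 : Filter.Tendsto (fun y : ℝ => y ^ 2 / 4) Filter.atTop Filter.atTop :=
      Filter.Tendsto.atTop_div_const (by norm_num) (tendsto_pow_atTop (by norm_num))
    have h3 := h2.comp (tendsto_neg_atBot_atTop : Filter.Tendsto (fun x : ℝ => -x)
      Filter.atBot Filter.atTop)
    refine h3.congr fun y => ?_
    simp [Function.comp]
  have h4 : Filter.Tendsto (fun y : ℝ => Real.exp (-y ^ 2 / 4)) Filter.atBot (nhds 0) := by
    have := Real.tendsto_exp_atBot.comp ((tendsto_neg_atTop_atBot).comp h1)
    refine this.congr fun y => ?_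
    simp [Function.comp]; ring_nf
  simpa using h4.const_mul gc

lemma gauss_tendsto_top : Filter.Tendsto (fun y : ℝ => gc * Real.exp (-y ^ 2 / 4))
    Filter.atTop (nhds 0) := by
  have h1 : Filter.Tendsto (fun y : ℝ => y ^ 2 / 4) Filter.atTop Filter.atTop :=
    Filter.Tendsto.atTop_div_const (by norm_num) (tendsto_pow_atTop (by norm_num))
  have h4 : Filter.Tendsto (fun y : ℝ => Real.exp (-y ^ 2 / 4)) Filter.atTop (nhds 0) := by
    have := Real.tendsto_exp_atBot.comp ((tendsto_neg_atTop_atBot).comp h1)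
    refine this.congr fun y => ?_
    simp [Function.comp]; ring_nf
  simpa using h4.const_mul gc

lemma gauss_scaled_deriv (y : ℝ) :
    HasDerivAt (fun y : ℝ => gc * Real.exp (-y ^ 2 / 4))
      (-y / 2 * (gc * Real.exp (-y ^ 2 / 4))) y := by
  have := (gauss_deriv y).const_mul gc
  refine this.congr_deriv ?_
  ring

lemma gauss_mul_integrableOn (s : Set ℝ) :
    IntegrableOn (fun y : ℝ => -y / 2 * (gc * Real.exp (-y ^ 2 / 4))) s := by
  apply Integrable.integrableOn
  have := gauss_mul_integrable.const_mul (-gc / 2)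
  refine this.congr (Filter.Eventually.of_forall fun y => ?_)
  ring
include hΦ

/-- K1 -/
lemma int_g_Ioo_left {u : ℝ} (hu : u ∈ Ioo (0:ℝ) 1) :
    ∫ a in Ioo (0:ℝ) u, (-(Function.invFun Φ a) / 2) =
      gc * Real.exp (-(Function.invFun Φ u) ^ 2 / 4) := by
  set x := Function.invFun Φ u with hx
  have hΦx : Φ x = u := phi_psi hΦ hu
  have himg : Φ '' (Iio x) = Ioo 0 u := by rw [phi_image_Iio hΦ, hΦx]
  have hcov := integral_image_eq_integral_abs_deriv_smul (measurableSet_Iio (a := x))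
    (fun y _ => (phi_hasDerivAt hΦ y).hasDerivWithinAt)
    ((phi_strictMono hΦ).injective.injOn) (fun a => -(Function.invFun Φ a) / 2)
  rw [himg] at hcov
  rw [hcov]
  have hcong : ∀ y : ℝ, |gc * Real.exp (-y ^ 2 / 4)| • (-(Function.invFun Φ (Φ y)) / 2) =
      -y / 2 * (gc * Real.exp (-y ^ 2 / 4)) := by
    intro y
    rw [psi_phi hΦ y, abs_of_pos (by have := gc_pos; positivity), smul_eq_mul]
    ring
  rw [integral_congr_ae (Filter.Eventually.of_forall fun y => hcong y)]
  have hIic : ∫ y in Iio x, -y / 2 * (gc * Real.exp (-y ^ 2 / 4)) =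
      ∫ y in Iic x, -y / 2 * (gc * Real.exp (-y ^ 2 / 4)) := by
    apply setIntegral_congr_set
    exact Iio_ae_eq_Iic
  rw [hIic]
  have := integral_Iic_of_hasDerivAt_of_tendsto' (a := x)
    (fun y _ => gauss_scaled_deriv y) (gauss_mul_integrableOn (Iic x)) gauss_tendsto_bot
  rw [this, sub_zero]

/-- K2 -/
lemma int_g_Ioo_right {v : ℝ} (hv : v ∈ Ioo (0:ℝ) 1) :
    ∫ a in Ioo v 1, (-(Function.invFun Φ a) / 2) =
      -(gc * Real.exp (-(Function.invFun Φ v) ^ 2 / 4)) := by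
  set x := Function.invFun Φ v with hx
  have hΦx : Φ x = v := phi_psi hΦ hv
  have himg : Φ '' (Ioi x) = Ioo v 1 := by rw [phi_image_Ioi hΦ, hΦx]
  have hcov := integral_image_eq_integral_abs_deriv_smul (measurableSet_Ioi (a := x))
    (fun y _ => (phi_hasDerivAt hΦ y).hasDerivWithinAt)
    ((phi_strictMono hΦ).injective.injOn) (fun a => -(Function.invFun Φ a) / 2)
  rw [himg] at hcov
  rw [hcov]
  have hcong : ∀ y : ℝ, |gc * Real.exp (-y ^ 2 / 4)| • (-(Function.invFun Φ (Φ y)) / 2) =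
      -y / 2 * (gc * Real.exp (-y ^ 2 / 4)) := by
    intro y
    rw [psi_phi hΦ y, abs_of_pos (by have := gc_pos; positivity), smul_eq_mul]
    ring
  rw [integral_congr_ae (Filter.Eventually.of_forall fun y => hcong y)]
  have := integral_Ioi_of_hasDerivAt_of_tendsto' (a := x)
    (fun y _ => gauss_scaled_deriv y) (gauss_mul_integrableOn (Ioi x)) gauss_tendsto_top
  rw [this, zero_sub]

/-- K3 value -/
lemma int_g_sq : ∫ a in Ioo (0:ℝ) 1, (-(Function.invFun Φ a) / 2) ^ 2 = 1 / 2 := by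
  have hcov := integral_image_eq_integral_abs_deriv_smul (MeasurableSet.univ (α := ℝ))
    (fun y _ => (phi_hasDerivAt hΦ y).hasDerivWithinAt)
    ((phi_strictMono hΦ).injective.injOn) (fun a => (-(Function.invFun Φ a) / 2) ^ 2)
  rw [phi_image_univ hΦ] at hcov
  rw [hcov]
  have hcong : ∀ y : ℝ, |gc * Real.exp (-y ^ 2 / 4)| • ((-(Function.invFun Φ (Φ y)) / 2) ^ 2) =
      gc / 4 * (y ^ 2 * Real.exp (-y ^ 2 / 4)) := by
    intro y
    rw [psi_phi hΦ y, abs_of_pos (by have := gc_pos; positivity), smul_eq_mul]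
    ring
  rw [integral_congr_ae (Filter.Eventually.of_forall fun y => hcong y)]
  rw [setIntegral_univ, integral_const_mul, gauss_sq_int]
  rw [show gc / 4 * (2 * Real.sqrt (4 * Real.pi)) = gc * Real.sqrt (4 * Real.pi) / 2 by ring,
    gc_mul]

/-- K3 integrability -/
lemma int_g_sq_integrable :
    IntegrableOn (fun a : ℝ => (-(Function.invFun Φ a) / 2) ^ 2) (Ioo (0:ℝ) 1) := by
  have hiff := integrableOn_image_iff_integrableOn_abs_deriv_smul (MeasurableSet.univ (α := ℝ))
    (fun y _ => (phi_hasDerivAt hΦ y).hasDerivWithinAt)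
    ((phi_strictMono hΦ).injective.injOn) (fun a => (-(Function.invFun Φ a) / 2) ^ 2)
  rw [phi_image_univ hΦ] at hiff
  rw [hiff]
  rw [IntegrableOn, Measure.restrict_univ]
  have : Integrable (fun y : ℝ => gc / 4 * (y ^ 2 * Real.exp (-y ^ 2 / 4))) :=
    gauss_sq_integrable.const_mul _
  refine this.congr (Filter.Eventually.of_forall fun y => ?_)
  simp only [psi_phi hΦ, smul_eq_mul]
  rw [abs_of_pos (by have := gc_pos; positivity)]
  ring

end Psi

section Core

lemma abs_le_sq_add_one (x : ℝ) : |x| ≤ x ^ 2 + 1 := by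
  rcases abs_cases x with ⟨h1, _⟩ | ⟨h1, _⟩ <;> nlinarith [sq_nonneg (x - 1), sq_nonneg (x + 1)]

lemma integrable_of_sq {f : ℝ → ℝ} (hmeas : AEMeasurable f (volume.restrict (Ioo (0:ℝ) 1)))
    (hsq : IntegrableOn (fun a => f a ^ 2) (Ioo (0:ℝ) 1)) :
    IntegrableOn f (Ioo (0:ℝ) 1) := by
  have hconst : IntegrableOn (fun _ : ℝ => (1:ℝ)) (Ioo (0:ℝ) 1) := by
    exact integrableOn_const (by rw [Real.volume_Ioo]; exact ENNReal.ofReal_ne_top)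
  refine (hsq.add hconst).mono' hmeas.aestronglyMeasurable
    (Filter.Eventually.of_forall fun a => ?_)
  rw [Real.norm_eq_abs]
  exact (abs_le_sq_add_one (f a)).trans (by norm_num)

lemma layer_integrable (b : ℝ) (hb : 0 ≤ b) :
    IntegrableOn (fun t : ℝ => 2 * max (b - t) 0) (Ioi 0) := by
  have hsplit : Ioc (0:ℝ) b ∪ Ioi b = Ioi 0 := Ioc_union_Ioi_eq_Ioi hb
  have hcont : Continuous (fun t : ℝ => 2 * max (b - t) 0) :=
    continuous_const.mul ((continuous_const.sub continuous_id).max continuous_const)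
  have hint1 : IntegrableOn (fun t : ℝ => 2 * max (b - t) 0) (Ioc 0 b) :=
    hcont.integrableOn_Ioc
  have hint2 : IntegrableOn (fun t : ℝ => 2 * max (b - t) 0) (Ioi b) := by
    apply (integrable_zero ℝ ℝ _).integrableOn.congr
    apply (ae_restrict_mem measurableSet_Ioi).mono
    intro t ht
    simp only [mem_Ioi] at ht
    simp [max_eq_right (by linarith : b - t ≤ 0)]
  rw [← hsplit]
  exact hint1.union hint2

lemma layer_value (b : ℝ) (hb : 0 ≤ b) :
    ∫ t in Ioi (0:ℝ), 2 * max (b - t) 0 = b ^ 2 := by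
  have hsplit : Ioc (0:ℝ) b ∪ Ioi b = Ioi 0 := Ioc_union_Ioi_eq_Ioi hb
  have hcont : Continuous (fun t : ℝ => 2 * max (b - t) 0) :=
    continuous_const.mul ((continuous_const.sub continuous_id).max continuous_const)
  have hint1 : IntegrableOn (fun t : ℝ => 2 * max (b - t) 0) (Ioc 0 b) :=
    hcont.integrableOn_Ioc
  have hint2 : IntegrableOn (fun t : ℝ => 2 * max (b - t) 0) (Ioi b) := by
    apply (integrable_zero ℝ ℝ _).integrableOn.congr
    apply (ae_restrict_mem measurableSet_Ioi).mono
    intro t ht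
    simp only [mem_Ioi] at ht
    simp [max_eq_right (by linarith : b - t ≤ 0)]
  rw [← hsplit, setIntegral_union (Ioc_disjoint_Ioi le_rfl) measurableSet_Ioi hint1 hint2]
  have hz : ∫ t in Ioi b, 2 * max (b - t) 0 = 0 := by
    rw [integral_eq_zero_iff_of_nonneg_ae ?_ hint2]
    · apply (ae_restrict_mem measurableSet_Ioi).mono
      intro t ht
      simp only [mem_Ioi] at ht
      simp [max_eq_right (by linarith : b - t ≤ 0)]
    · exact Filter.Eventually.of_forall fun t => by positivity
  have hIoc : ∫ t in Ioc (0:ℝ) b, 2 * max (b - t) 0 = ∫ t in Ioc (0:ℝ) b, (2 * b - 2 * t) := by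
    apply setIntegral_congr_fun measurableSet_Ioc
    intro t ht
    show 2 * max (b - t) 0 = 2 * b - 2 * t
    rw [max_eq_left (by linarith [ht.2] : (0:ℝ) ≤ b - t)]
    ring
  rw [hz, add_zero, hIoc, ← intervalIntegral.integral_of_le hb,
    intervalIntegral.integral_sub intervalIntegrable_const
      ((intervalIntegral.intervalIntegrable_id).const_mul 2),
    intervalIntegral.integral_const, intervalIntegral.integral_const_mul, integral_id]
  simp
  ring

/-- layer cake for a single real number -/
lemma layer (x : ℝ) : ∫⁻ t in Ioi (0:ℝ),
    ENNReal.ofReal (2 * (max (x - t) 0 + max (-x - t) 0)) = ENNReal.ofReal (x ^ 2) := by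
  have hkey : ∀ᵐ t ∂volume, t ∈ Ioi (0:ℝ) →
      ENNReal.ofReal (2 * (max (x - t) 0 + max (-x - t) 0)) =
      ENNReal.ofReal (2 * max (|x| - t) 0) := by
    apply Filter.Eventually.of_forall
    intro t ht
    simp only [mem_Ioi] at ht
    congr 1
    rcases abs_cases x with ⟨hx, hx'⟩ | ⟨hx, hx'⟩
    · rw [hx, max_eq_right (show -x - t ≤ (0:ℝ) by linarith), add_zero]
    · rw [hx, max_eq_right (show x - t ≤ (0:ℝ) by linarith), zero_add]
  rw [setLIntegral_congr_fun_ae measurableSet_Ioi hkey,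
    ← ofReal_integral_eq_lintegral_ofReal (layer_integrable |x| (abs_nonneg x))
      (Filter.Eventually.of_forall fun t => by positivity),
    layer_value |x| (abs_nonneg x), sq_abs]

end Core

section PerT

variable {f G HH FG : ℝ → ℝ}

/-- total integral split -/
lemma split_Ioo (hf : IntegrableOn f (Ioo (0:ℝ) 1)) {v : ℝ} (hv : v ∈ Icc (0:ℝ) 1) :
    (∫ a in Ioo (0:ℝ) v, f a) + ∫ a in Ioo v 1, f a = ∫ a in Ioo (0:ℝ) 1, f a := by
  have h1 : IntervalIntegrable f volume 0 v := by
    rw [intervalIntegrable_iff_integrableOn_Ioo_of_le hv.1]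
    exact hf.mono_set (Ioo_subset_Ioo le_rfl hv.2)
  have h2 : IntervalIntegrable f volume v 1 := by
    rw [intervalIntegrable_iff_integrableOn_Ioo_of_le hv.2]
    exact hf.mono_set (Ioo_subset_Ioo hv.1 le_rfl)
  have := intervalIntegral.integral_add_adjacent_intervals h1 h2
  rw [intervalIntegral.integral_of_le hv.1, intervalIntegral.integral_of_le hv.2,
    intervalIntegral.integral_of_le (hv.1.trans hv.2), integral_Ioc_eq_integral_Ioo,
    integral_Ioc_eq_integral_Ioo, integral_Ioc_eq_integral_Ioo] at this
  exact this

lemma vol_Ioo_toReal {v : ℝ} (hv : 0 ≤ v) : (volume (Ioo (0:ℝ) v)).toReal = v := by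
  rw [Real.volume_Ioo, sub_zero, ENNReal.toReal_ofReal hv]

lemma vol_Ioo_toReal' {v : ℝ} (hv : v ≤ 1) : (volume (Ioo v (1:ℝ))).toReal = 1 - v := by
  rw [Real.volume_Ioo, ENNReal.toReal_ofReal (by linarith)]

lemma per_t_left (hmono : AntitoneOn f (Ioo (0:ℝ) 1)) (hf : IntegrableOn f (Ioo (0:ℝ) 1))
    (hG : IntegrableOn G (Ioo (0:ℝ) 1))
    (hHH : ∀ u ∈ Icc (0:ℝ) 1, HH u = ∫ a in Ioo (0:ℝ) u, f a)
    (hFG : ∀ u ∈ Ioo (0:ℝ) 1, FG u = ∫ a in Ioo (0:ℝ) u, G a)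
    (hle : ∀ u ∈ Ioo (0:ℝ) 1, HH u ≤ FG u)
    (htot : (∫ a in Ioo (0:ℝ) 1, f a) ≤ 0)
    {t : ℝ} (ht : 0 ≤ t) :
    (∫ a in Ioo (0:ℝ) 1, max (f a - t) 0) ≤ ∫ a in Ioo (0:ℝ) 1, max (G a - t) 0 := by
  classical
  set S : Set ℝ := {a ∈ Ioo (0:ℝ) 1 | t < f a} with hS
  set u : ℝ := sSup (insert 0 S) with hu
  have hbdd : BddAbove (insert 0 S) := by
    refine ⟨1, ?_⟩
    rintro b (rfl | hb)
    · norm_num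
    · exact hb.1.2.le
  have hu0 : 0 ≤ u := le_csSup hbdd (mem_insert 0 S)
  have hu1 : u ≤ 1 := csSup_le (insert_nonempty 0 S) (by
    rintro b (rfl | hb)
    · norm_num
    · exact hb.1.2.le)
  have hin : ∀ a ∈ Ioo (0:ℝ) 1, a < u → t < f a := by
    intro a ha hau
    obtain ⟨b, hb, hab⟩ := exists_lt_of_lt_csSup (insert_nonempty 0 S) hau
    rcases hb with rfl | hb
    · linarith [ha.1]
    · exact lt_of_lt_of_le hb.2 (hmono ha hb.1 hab.le)
  have hout : ∀ a ∈ Ioo (0:ℝ) 1, u < a → f a ≤ t := by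
    intro a ha hua
    by_contra hcon
    push_neg at hcon
    have : a ∈ S := ⟨ha, hcon⟩
    exact absurd (le_csSup hbdd (mem_insert_of_mem 0 this)) (not_le.2 hua)
  -- a.e. identity
  have hae : (fun a => max (f a - t) 0) =ᵐ[volume.restrict (Ioo (0:ℝ) 1)]
      (Ioo (0:ℝ) u).indicator (fun a => f a - t) := by
    have hne : ∀ᵐ a ∂(volume.restrict (Ioo (0:ℝ) 1)), a ≠ u := by
      refine ae_iff.2 ?_
      have : {a : ℝ | ¬a ≠ u} = {u} := by ext a; simp [not_not]
      rw [this, Measure.restrict_apply (measurableSet_singleton u)]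
      exact measure_mono_null inter_subset_left (measure_singleton u)
    filter_upwards [ae_restrict_mem measurableSet_Ioo, hne] with a ha hne'
    rcases lt_or_gt_of_ne hne' with hlt | hgt
    · have hmem : a ∈ Ioo (0:ℝ) u := mem_Ioo.2 ⟨ha.1, hlt⟩
      rw [Set.indicator_of_mem hmem]
      exact max_eq_left (by linarith [hin a ha hlt])
    · have hmem : a ∉ Ioo (0:ℝ) u := fun hmem => absurd hmem.2 (not_lt.2 hgt.le)
      rw [Set.indicator_of_notMem hmem]
      exact max_eq_right (by linarith [hout a ha hgt])
  have hIoosub : Ioo (0:ℝ) u ⊆ Ioo (0:ℝ) 1 := Ioo_subset_Ioo le_rfl hu1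
  have step1 : (∫ a in Ioo (0:ℝ) 1, max (f a - t) 0) = ∫ a in Ioo (0:ℝ) u, (f a - t) := by
    rw [integral_congr_ae hae, integral_indicator measurableSet_Ioo,
      Measure.restrict_restrict measurableSet_Ioo, inter_eq_self_of_subset_left hIoosub]
  have hconst : ∀ v : ℝ, v ∈ Icc (0:ℝ) 1 → ∫ _ in Ioo (0:ℝ) v, t ∂volume = t * v := by
    intro v hv
    rw [setIntegral_const, measureReal_def, vol_Ioo_toReal hv.1, smul_eq_mul, mul_comm]
  have step2 : (∫ a in Ioo (0:ℝ) 1, max (f a - t) 0) = (∫ a in Ioo (0:ℝ) u, f a) - t * u := by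
    rw [step1, integral_sub (hf.mono_set hIoosub) (integrableOn_const (by
      rw [Real.volume_Ioo]; exact ENNReal.ofReal_ne_top)), hconst u ⟨hu0, hu1⟩]
  have hRHSnn : 0 ≤ ∫ a in Ioo (0:ℝ) 1, max (G a - t) 0 :=
    setIntegral_nonneg measurableSet_Ioo fun a _ => le_max_right _ 0
  rcases eq_or_lt_of_le hu0 with hu0' | hu0'
  · rw [step2, ← hu0', Ioo_self]
    simpa using hRHSnn
  rcases eq_or_lt_of_le hu1 with hu1' | hu1'
  · rw [step2, hu1']
    refine le_trans ?_ hRHSnn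
    rw [hu1'] at *
    nlinarith [htot]
  -- main case : u ∈ Ioo 0 1
  have humem : u ∈ Ioo (0:ℝ) 1 := ⟨hu0', hu1'⟩
  have hHu : (∫ a in Ioo (0:ℝ) u, f a) = HH u := (hHH u ⟨hu0, hu1⟩).symm
  have hFu : FG u = ∫ a in Ioo (0:ℝ) u, G a := hFG u humem
  have step3 : (∫ a in Ioo (0:ℝ) 1, max (f a - t) 0) ≤ ∫ a in Ioo (0:ℝ) u, (G a - t) := by
    rw [step2, hHu]
    have h1 : HH u - t * u ≤ FG u - t * u := by linarith [hle u humem]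
    rw [integral_sub (hG.mono_set hIoosub) (integrableOn_const (by
      rw [Real.volume_Ioo]; exact ENNReal.ofReal_ne_top)), hconst u ⟨hu0, hu1⟩]
    rw [← hFu] at *
    linarith
  refine step3.trans ?_
  have step4 : (∫ a in Ioo (0:ℝ) u, (G a - t)) ≤ ∫ a in Ioo (0:ℝ) u, max (G a - t) 0 := by
    apply integral_mono_ae
    · exact (hG.mono_set hIoosub).sub (integrableOn_const (by
        rw [Real.volume_Ioo]; exact ENNReal.ofReal_ne_top))
    · exact ((hG.mono_set hIoosub).sub (integrableOn_const (by
        rw [Real.volume_Ioo]; exact ENNReal.ofReal_ne_top))).pos_part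
    · exact Filter.Eventually.of_forall fun a => le_max_left _ 0
  refine step4.trans ?_
  apply setIntegral_mono_set
  · exact (hG.sub (integrableOn_const (by
      rw [Real.volume_Ioo]; exact ENNReal.ofReal_ne_top))).pos_part
  · exact Filter.Eventually.of_forall fun a => le_max_right _ 0
  · exact HasSubset.Subset.eventuallyLE hIoosub

lemma per_t_right (hmono : AntitoneOn f (Ioo (0:ℝ) 1)) (hf : IntegrableOn f (Ioo (0:ℝ) 1))
    (hG : IntegrableOn G (Ioo (0:ℝ) 1))
    (hHH : ∀ u ∈ Icc (0:ℝ) 1, HH u = ∫ a in Ioo (0:ℝ) u, f a)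
    (hFG2 : ∀ v ∈ Ioo (0:ℝ) 1, (∫ a in Ioo v 1, G a) = -FG v)
    (hle : ∀ u ∈ Ioo (0:ℝ) 1, HH u ≤ FG u)
    (htot : (∫ a in Ioo (0:ℝ) 1, f a) = 0)
    {t : ℝ} (ht : 0 ≤ t) :
    (∫ a in Ioo (0:ℝ) 1, max (-f a - t) 0) ≤ ∫ a in Ioo (0:ℝ) 1, max (-G a - t) 0 := by
  classical
  set S : Set ℝ := {a ∈ Ioo (0:ℝ) 1 | t < -f a} with hS
  set v : ℝ := sInf (insert 1 S) with hv
  have hbdd : BddBelow (insert 1 S) := by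
    refine ⟨0, ?_⟩
    rintro b (rfl | hb)
    · norm_num
    · exact hb.1.1.le
  have hv1 : v ≤ 1 := csInf_le hbdd (mem_insert 1 S)
  have hv0 : 0 ≤ v := le_csInf (insert_nonempty 1 S) (by
    rintro b (rfl | hb)
    · norm_num
    · exact hb.1.1.le)
  have hin : ∀ a ∈ Ioo (0:ℝ) 1, v < a → t < -f a := by
    intro a ha hva
    obtain ⟨b, hb, hab⟩ := exists_lt_of_csInf_lt (insert_nonempty 1 S) hva
    rcases hb with rfl | hb
    · linarith [ha.2]
    · have := hmono hb.1 ha hab.le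
      linarith [hb.2]
  have hout : ∀ a ∈ Ioo (0:ℝ) 1, a < v → -f a ≤ t := by
    intro a ha hav
    by_contra hcon
    push_neg at hcon
    have : a ∈ S := ⟨ha, hcon⟩
    exact absurd (csInf_le hbdd (mem_insert_of_mem 1 this)) (not_le.2 hav)
  have hae : (fun a => max (-f a - t) 0) =ᵐ[volume.restrict (Ioo (0:ℝ) 1)]
      (Ioo v 1).indicator (fun a => -f a - t) := by
    have hne : ∀ᵐ a ∂(volume.restrict (Ioo (0:ℝ) 1)), a ≠ v := by
      refine ae_iff.2 ?_
      have : {a : ℝ | ¬a ≠ v} = {v} := by ext a; simp [not_not]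
      rw [this, Measure.restrict_apply (measurableSet_singleton v)]
      exact measure_mono_null inter_subset_left (measure_singleton v)
    filter_upwards [ae_restrict_mem measurableSet_Ioo, hne] with a ha hne'
    rcases lt_or_gt_of_ne hne' with hlt | hgt
    · have hmem : a ∉ Ioo v 1 := fun hmem => absurd hmem.1 (not_lt.2 hlt.le)
      rw [Set.indicator_of_notMem hmem]
      exact max_eq_right (by linarith [hout a ha hlt])
    · have hmem : a ∈ Ioo v 1 := mem_Ioo.2 ⟨hgt, ha.2⟩
      rw [Set.indicator_of_mem hmem]
      exact max_eq_left (by linarith [hin a ha hgt])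
  have hIoosub : Ioo v 1 ⊆ Ioo (0:ℝ) 1 := Ioo_subset_Ioo hv0 le_rfl
  have hconst : IntegrableOn (fun _ : ℝ => t) (Ioo v 1) := integrableOn_const (by
    rw [Real.volume_Ioo]; exact ENNReal.ofReal_ne_top)
  have step1 : (∫ a in Ioo (0:ℝ) 1, max (-f a - t) 0) = ∫ a in Ioo v 1, (-f a - t) := by
    rw [integral_congr_ae hae, integral_indicator measurableSet_Ioo,
      Measure.restrict_restrict measurableSet_Ioo, inter_eq_self_of_subset_left hIoosub]
  have hsplit : (∫ a in Ioo v 1, f a) = -HH v := by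
    have h1 := split_Ioo hf (⟨hv0, hv1⟩ : v ∈ Icc (0:ℝ) 1)
    rw [htot] at h1
    rw [hHH v ⟨hv0, hv1⟩]
    linarith
  have step2 : (∫ a in Ioo (0:ℝ) 1, max (-f a - t) 0) = HH v - t * (1 - v) := by
    have hnegf : IntegrableOn (fun a => -f a) (Ioo v 1) := (hf.mono_set hIoosub).neg
    rw [step1, integral_sub hnegf hconst, integral_neg, hsplit,
      setIntegral_const, measureReal_def, vol_Ioo_toReal' hv1, smul_eq_mul, mul_comm, neg_neg]
  have hRHSnn : 0 ≤ ∫ a in Ioo (0:ℝ) 1, max (-G a - t) 0 :=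
    setIntegral_nonneg measurableSet_Ioo fun a _ => le_max_right _ 0
  rcases eq_or_lt_of_le hv0 with hv0' | hv0'
  · rw [step2, ← hv0']
    have hHH0 : HH 0 = 0 := by
      rw [hHH 0 ⟨le_rfl, by norm_num⟩, Ioo_self]
      simp
    rw [hHH0]
    refine le_trans (by linarith) hRHSnn
  rcases eq_or_lt_of_le hv1 with hv1' | hv1'
  · rw [step2, hv1']
    have hHH1 : HH 1 = ∫ a in Ioo (0:ℝ) 1, f a := hHH 1 ⟨by norm_num, le_rfl⟩
    rw [hHH1, htot]
    refine le_trans (by linarith) hRHSnn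
  have hvmem : v ∈ Ioo (0:ℝ) 1 := ⟨hv0', hv1'⟩
  have step3 : (∫ a in Ioo (0:ℝ) 1, max (-f a - t) 0) ≤ ∫ a in Ioo v 1, (-G a - t) := by
    have hnegG : IntegrableOn (fun a => -G a) (Ioo v 1) := (hG.mono_set hIoosub).neg
    rw [step2, integral_sub hnegG hconst, integral_neg, hFG2 v hvmem,
      setIntegral_const, measureReal_def, vol_Ioo_toReal' hv1, smul_eq_mul, mul_comm, neg_neg]
    have := hle v hvmem
    linarith
  refine step3.trans ?_
  have step4 : (∫ a in Ioo v 1, (-G a - t)) ≤ ∫ a in Ioo v 1, max (-G a - t) 0 := by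
    apply integral_mono_ae
    · exact ((hG.mono_set hIoosub).neg).sub hconst
    · exact (((hG.mono_set hIoosub).neg).sub hconst).pos_part
    · exact Filter.Eventually.of_forall fun a => le_max_left _ 0
  refine step4.trans ?_
  apply setIntegral_mono_set
  · exact ((hG.neg).sub (integrableOn_const (by
      rw [Real.volume_Ioo]; exact ENNReal.ofReal_ne_top))).pos_part
  · exact Filter.Eventually.of_forall fun a => le_max_right _ 0
  · exact HasSubset.Subset.eventuallyLE hIoosub

end PerT

section Double

lemma double {f : ℝ → ℝ} (hmeas : AEMeasurable f (volume.restrict (Ioo (0:ℝ) 1))) :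
    ∫⁻ a in Ioo (0:ℝ) 1, ENNReal.ofReal (f a ^ 2) =
    ∫⁻ t in Ioi (0:ℝ), ∫⁻ a in Ioo (0:ℝ) 1,
      ENNReal.ofReal (2 * (max (f a - t) 0 + max (-f a - t) 0)) := by
  have hstep : ∫⁻ a in Ioo (0:ℝ) 1, ENNReal.ofReal (f a ^ 2) =
      ∫⁻ a in Ioo (0:ℝ) 1, ∫⁻ t in Ioi (0:ℝ),
        ENNReal.ofReal (2 * (max (f a - t) 0 + max (-f a - t) 0)) :=
    lintegral_congr fun a => (layer (f a)).symm
  rw [hstep]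
  have huncurry : AEMeasurable
      (Function.uncurry fun a t =>
        ENNReal.ofReal (2 * (max (f a - t) 0 + max (-f a - t) 0)))
      ((volume.restrict (Ioo (0:ℝ) 1)).prod (volume.restrict (Ioi (0:ℝ)))) := by
    have hfst : AEMeasurable (fun p : ℝ × ℝ => f p.1)
        ((volume.restrict (Ioo (0:ℝ) 1)).prod (volume.restrict (Ioi (0:ℝ)))) := hmeas.comp_fst
    have hsnd : AEMeasurable (fun p : ℝ × ℝ => p.2)
        ((volume.restrict (Ioo (0:ℝ) 1)).prod (volume.restrict (Ioi (0:ℝ)))) :=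
      measurable_snd.aemeasurable
    have hinner : AEMeasurable (fun p : ℝ × ℝ =>
        2 * (max (f p.1 - p.2) 0 + max (-f p.1 - p.2) 0))
        ((volume.restrict (Ioo (0:ℝ) 1)).prod (volume.restrict (Ioi (0:ℝ)))) :=
      (((hfst.sub hsnd).max aemeasurable_const).add
        ((hfst.neg.sub hsnd).max aemeasurable_const)).const_mul 2
    exact ENNReal.measurable_ofReal.comp_aemeasurable hinner
  exact lintegral_lintegral_swap huncurry

end Double

end BamlerAux
open BamlerAux Set in
/-- Bamler's L² estimate: if q has ν-mean zero, h is its decreasing rearrangement on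
(0,1) (so ∫ q² dν = ∫_0^1 h²), and H(a) = ∫_0^a h satisfies H(0) = H(1) = 0, H concave,
and H ≤ F on (0,1) with F(s) = Φ'(Φ⁻¹(s)), then ∫_0^1 h² ≤ 1/2 and ∫ q² dν ≤ 1/2. -/
theorem L2_bound_from_rearrangement {M : Type*} [MeasurableSpace M]
    (ν : Measure M) [IsProbabilityMeasure ν] (q : M → ℝ)
    (hq0 : ∫ x, q x ∂ν = 0)
    (h : ℝ → ℝ) (hmono : AntitoneOn h (Set.Ioo 0 1))
    (hequi : ∫ x, q x ^ 2 ∂ν = ∫ a in (0:ℝ)..1, h a ^ 2)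
    (Φ F H : ℝ → ℝ)
    (hΦ : ∀ x : ℝ, Φ x = (Real.sqrt (4 * Real.pi))⁻¹ * ∫ y in Set.Iic x, Real.exp (-y ^ 2 / 4))
    (hF : ∀ s : ℝ, F s = deriv Φ (Function.invFun Φ s))
    (hH : ∀ a : ℝ, H a = ∫ t in (0:ℝ)..a, h t)
    (hH0 : H 0 = 0) (hH1 : H 1 = 0)
    (hconc : ConcaveOn ℝ (Set.Icc 0 1) H)
    (hHF : ∀ a ∈ Set.Ioo (0:ℝ) 1, H a ≤ F a) :
    (∫ a in (0:ℝ)..1, h a ^ 2) ≤ 1/2 ∧ (∫ x, q x ^ 2 ∂ν) ≤ 1/2 := by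
  suffices hmain : (∫ a in (0:ℝ)..1, h a ^ 2) ≤ 1/2 by
    refine ⟨hmain, ?_⟩
    rw [hequi]
    exact hmain
  by_cases hsq : IntervalIntegrable (fun a => h a ^ 2) volume 0 1
  swap
  · rw [intervalIntegral.integral_undef hsq]
    norm_num
  -- main case
  have hIoo_sq : IntegrableOn (fun a => h a ^ 2) (Ioo (0:ℝ) 1) := by
    rw [intervalIntegrable_iff_integrableOn_Ioo_of_le (by norm_num : (0:ℝ) ≤ 1)] at hsq
    exact hsq
  have hmeas_h : AEMeasurable h (volume.restrict (Ioo (0:ℝ) 1)) :=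
    aemeasurable_restrict_of_antitoneOn measurableSet_Ioo hmono
  have hint_h : IntegrableOn h (Ioo (0:ℝ) 1) := integrable_of_sq hmeas_h hIoo_sq
  set g : ℝ → ℝ := fun a => -(Function.invFun Φ a) / 2 with hg
  have hmeas_g : AEMeasurable g (volume.restrict (Ioo (0:ℝ) 1)) := by
    have hψ : AEMeasurable (Function.invFun Φ) (volume.restrict (Ioo (0:ℝ) 1)) :=
      aemeasurable_restrict_of_monotoneOn measurableSet_Ioo (psi_monotoneOn hΦ)
    exact (hψ.neg).div_const 2
  have hint_gsq : IntegrableOn (fun a => g a ^ 2) (Ioo (0:ℝ) 1) := int_g_sq_integrable hΦ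
  have hint_g : IntegrableOn g (Ioo (0:ℝ) 1) := integrable_of_sq hmeas_g hint_gsq
  have hFval : ∀ s : ℝ, F s = gc * Real.exp (-(Function.invFun Φ s) ^ 2 / 4) := by
    intro s
    rw [hF s, (phi_hasDerivAt hΦ (Function.invFun Φ s)).deriv]
  have hFG : ∀ u ∈ Ioo (0:ℝ) 1, F u = ∫ a in Ioo (0:ℝ) u, g a := by
    intro u hu
    rw [hFval u, ← int_g_Ioo_left hΦ hu]
  have hFG2 : ∀ v ∈ Ioo (0:ℝ) 1, (∫ a in Ioo v 1, g a) = -F v := by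
    intro v hv
    rw [int_g_Ioo_right hΦ hv, hFval v]
  have hHH : ∀ u ∈ Icc (0:ℝ) 1, H u = ∫ a in Ioo (0:ℝ) u, h a := by
    intro u hu
    rw [hH u, intervalIntegral.integral_of_le hu.1, integral_Ioc_eq_integral_Ioo]
  have htot0 : (∫ a in Ioo (0:ℝ) 1, h a) = 0 :=
    (hHH 1 ⟨by norm_num, le_rfl⟩).symm.trans hH1
  have hconstI : ∀ t : ℝ, IntegrableOn (fun _ : ℝ => t) (Ioo (0:ℝ) 1) := fun t =>
    integrableOn_const (by rw [Real.volume_Ioo]; exact ENNReal.ofReal_ne_top)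
  -- per-t comparison, in ℝ≥0∞
  have hcomp : ∀ t ∈ Ioi (0:ℝ),
      (∫⁻ a in Ioo (0:ℝ) 1, ENNReal.ofReal (2 * (max (h a - t) 0 + max (-h a - t) 0))) ≤
      ∫⁻ a in Ioo (0:ℝ) 1, ENNReal.ofReal (2 * (max (g a - t) 0 + max (-g a - t) 0)) := by
    intro t ht
    have ht' : (0:ℝ) ≤ t := (mem_Ioi.1 ht).le
    have hIh1 : IntegrableOn (fun a => max (h a - t) 0) (Ioo (0:ℝ) 1) :=
      (hint_h.sub (hconstI t)).pos_part
    have hIh2 : IntegrableOn (fun a => max (-h a - t) 0) (Ioo (0:ℝ) 1) := by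
      have : IntegrableOn (fun a => -h a) (Ioo (0:ℝ) 1) := hint_h.neg
      exact (this.sub (hconstI t)).pos_part
    have hIg1 : IntegrableOn (fun a => max (g a - t) 0) (Ioo (0:ℝ) 1) :=
      (hint_g.sub (hconstI t)).pos_part
    have hIg2 : IntegrableOn (fun a => max (-g a - t) 0) (Ioo (0:ℝ) 1) := by
      have : IntegrableOn (fun a => -g a) (Ioo (0:ℝ) 1) := hint_g.neg
      exact (this.sub (hconstI t)).pos_part
    have hIh : IntegrableOn (fun a => 2 * (max (h a - t) 0 + max (-h a - t) 0)) (Ioo (0:ℝ) 1) :=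
      (hIh1.add hIh2).const_mul 2
    have hIg : IntegrableOn (fun a => 2 * (max (g a - t) 0 + max (-g a - t) 0)) (Ioo (0:ℝ) 1) :=
      (hIg1.add hIg2).const_mul 2
    rw [← ofReal_integral_eq_lintegral_ofReal hIh
        (Filter.Eventually.of_forall fun a => by positivity),
      ← ofReal_integral_eq_lintegral_ofReal hIg
        (Filter.Eventually.of_forall fun a => by positivity)]
    apply ENNReal.ofReal_le_ofReal
    rw [integral_const_mul, integral_const_mul, integral_add hIh1 hIh2, integral_add hIg1 hIg2]
    have hL := per_t_left (f := h) (G := g) (HH := H) (FG := F) hmono hint_h hint_g hHH hFG hHF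
      (le_of_eq htot0) ht'
    have hR := per_t_right (f := h) (G := g) (HH := H) (FG := F) hmono hint_h hint_g hHH hFG2 hHF
      htot0 ht'
    linarith
  -- the ENNReal chain
  have hchain : (∫⁻ a in Ioo (0:ℝ) 1, ENNReal.ofReal (h a ^ 2)) ≤ ENNReal.ofReal (1/2) := by
    calc ∫⁻ a in Ioo (0:ℝ) 1, ENNReal.ofReal (h a ^ 2)
        = ∫⁻ t in Ioi (0:ℝ), ∫⁻ a in Ioo (0:ℝ) 1,
            ENNReal.ofReal (2 * (max (h a - t) 0 + max (-h a - t) 0)) := double hmeas_h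
      _ ≤ ∫⁻ t in Ioi (0:ℝ), ∫⁻ a in Ioo (0:ℝ) 1,
            ENNReal.ofReal (2 * (max (g a - t) 0 + max (-g a - t) 0)) := by
          apply lintegral_mono_ae
          filter_upwards [ae_restrict_mem measurableSet_Ioi] with t ht
          exact hcomp t ht
      _ = ∫⁻ a in Ioo (0:ℝ) 1, ENNReal.ofReal (g a ^ 2) := (double hmeas_g).symm
      _ = ENNReal.ofReal (∫ a in Ioo (0:ℝ) 1, g a ^ 2) :=
          (ofReal_integral_eq_lintegral_ofReal hint_gsq
            (Filter.Eventually.of_forall fun a => by positivity)).symm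
      _ = ENNReal.ofReal (1/2) := by rw [int_g_sq hΦ]
  -- conclude
  have heq : ∫ a in Ioo (0:ℝ) 1, h a ^ 2 =
      (∫⁻ a in Ioo (0:ℝ) 1, ENNReal.ofReal (h a ^ 2)).toReal := by
    rw [integral_eq_lintegral_of_nonneg_ae (Filter.Eventually.of_forall fun a => by positivity)
      ((hmeas_h.pow_const 2).aestronglyMeasurable)]
  rw [intervalIntegral.integral_of_le (by norm_num : (0:ℝ) ≤ 1), integral_Ioc_eq_integral_Ioo,
    heq]
  exact ENNReal.toReal_le_of_le_ofReal (by norm_num) hchain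
end
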